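/- arXiv:math/0612216 — 7 statements merged into one kernel-verified Lean document; each statement's English description precedes it below -/
import Mathlib

section
/- For every fixed complex number z, the limit of E_q((1−q)z) = ∑_{k=0}^∞ q^{k(k−1)/2} (1−q)^k z^k / (q;q)_k as q tends to 1 from the left (q ∈ (0,1), q → 1⁻) equals e^z. -/
open scoped BigOperators

open Filter Finset in
private lemma stmt4_geom (x : ℂ) (n : ℕ) :
    (1 : ℂ) - x ^ n = (1 - x) * ∑ i ∈ range n, x ^ i := by
  have h := geom_sum_mul x n
  linear_combination h

private lemma stmt4_exp (z : ℂ) :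
    Complex.exp z = ∑' k : ℕ, z ^ k / (Nat.factorial k : ℂ) := by
  rw [Complex.exp_eq_exp_ℂ, NormedSpace.exp_eq_tsum_div]

open Filter Finset in
/-- For every fixed `z : ℂ`, the limit of
`E_q((1-q)z) = ∑_{k=0}^∞ q^{k(k-1)/2} (1-q)^k z^k / (q;q)_k` as `q → 1⁻` with `q ∈ (0,1)`
equals `e^z`. -/
theorem stmt4 (z : ℂ) :
    Filter.Tendsto
      (fun q : ℝ => ∑' k : ℕ, (q : ℂ) ^ (k * (k - 1) / 2) * ((1 : ℂ) - (q : ℂ)) ^ k * z ^ k /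
          ∏ j ∈ Finset.range k, (1 - (q : ℂ) ^ (j + 1)))
      (nhdsWithin 1 (Set.Ioo 0 1)) (nhds (Complex.exp z)) := by
  rw [stmt4_exp z]
  -- alternate form of each term, valid for `q ∈ (0,1)`
  have key : ∀ q ∈ Set.Ioo (0:ℝ) 1, ∀ k : ℕ,
      (q : ℂ) ^ (k * (k - 1) / 2) * ((1 : ℂ) - (q : ℂ)) ^ k * z ^ k /
          ∏ j ∈ range k, (1 - (q : ℂ) ^ (j + 1))
        = (q : ℂ) ^ (k * (k - 1) / 2) * z ^ k /
          ∏ j ∈ range k, (∑ i ∈ range (j + 1), (q : ℂ) ^ i) := by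
    intro q hq k
    have hq1 : (1 : ℂ) - (q : ℂ) ≠ 0 := by
      have h1 : (q : ℂ) ≠ 1 := by exact_mod_cast ne_of_lt hq.2
      intro h; exact h1 (by linear_combination -h)
    have hprd : ∏ j ∈ range k, ((1 : ℂ) - (q : ℂ) ^ (j + 1))
        = ((1 : ℂ) - (q : ℂ)) ^ k * ∏ j ∈ range k, (∑ i ∈ range (j + 1), (q : ℂ) ^ i) := by
      rw [Finset.prod_congr rfl (fun j _ => stmt4_geom (q : ℂ) (j + 1)),
        Finset.prod_mul_distrib, Finset.prod_const, Finset.card_range]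
    rw [hprd, show (q:ℂ) ^ (k * (k - 1) / 2) * ((1:ℂ) - q) ^ k * z ^ k
        = ((1:ℂ) - q) ^ k * ((q:ℂ) ^ (k * (k - 1) / 2) * z ^ k) by ring,
      mul_div_mul_left _ _ (pow_ne_zero k hq1)]
  apply tendsto_tsum_of_dominated_convergence
    (bound := fun k : ℕ => ‖z‖ ^ k / (Nat.factorial k : ℝ))
  · exact Real.summable_pow_div_factorial ‖z‖
  · -- pointwise limits
    intro k
    have hden1 : ∏ j ∈ range k, (∑ i ∈ range (j + 1), (((1:ℝ) : ℂ)) ^ i)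
        = (Nat.factorial k : ℂ) := by
      simp only [Complex.ofReal_one, one_pow, Finset.sum_const, Finset.card_range,
        nsmul_eq_mul, mul_one]
      rw [← Finset.prod_range_add_one_eq_factorial k]
      push_cast
      rfl
    have hcont : Filter.Tendsto (fun q : ℝ =>
        (q : ℂ) ^ (k * (k - 1) / 2) * z ^ k /
          ∏ j ∈ range k, (∑ i ∈ range (j + 1), (q : ℂ) ^ i)) (nhds 1)
        (nhds (z ^ k / (Nat.factorial k : ℂ))) := by
      have h1 : Filter.Tendsto (fun q : ℝ => (q : ℂ) ^ (k * (k - 1) / 2) * z ^ k) (nhds 1)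
          (nhds (z ^ k)) := by
        have : Continuous (fun q : ℝ => (q : ℂ) ^ (k * (k - 1) / 2) * z ^ k) := by
          continuity
        simpa using this.tendsto 1
      have h2 : Filter.Tendsto
          (fun q : ℝ => ∏ j ∈ range k, (∑ i ∈ range (j + 1), (q : ℂ) ^ i)) (nhds 1)
          (nhds (Nat.factorial k : ℂ)) := by
        have : Continuous (fun q : ℝ => ∏ j ∈ range k, (∑ i ∈ range (j + 1), (q : ℂ) ^ i)) := by
          continuity
        have h2' := this.tendsto 1
        rwa [hden1] at h2'
      exact h1.div h2 (Nat.cast_ne_zero.mpr (Nat.factorial_ne_zero k))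
    refine Filter.Tendsto.congr' ?_ (hcont.mono_left nhdsWithin_le_nhds)
    filter_upwards [self_mem_nhdsWithin] with q hq
    exact (key q hq k).symm
  · -- uniform bound
    filter_upwards [self_mem_nhdsWithin] with q hq k
    rw [key q hq k]
    have hq0 : 0 < q := hq.1
    have hq1 : q < 1 := hq.2
    -- rewrite the denominator as a real number
    have hcast : ∏ j ∈ range k, (∑ i ∈ range (j + 1), (q : ℂ) ^ i)
        = ((∏ j ∈ range k, (∑ i ∈ range (j + 1), q ^ i) : ℝ) : ℂ) := by
      push_cast; rfl
    set P : ℝ := ∏ j ∈ range k, (∑ i ∈ range (j + 1), q ^ i) with hP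
    have hterm : ∀ j : ℕ, ((j : ℝ) + 1) * q ^ j ≤ ∑ i ∈ range (j + 1), q ^ i := by
      intro j
      have h := Finset.card_nsmul_le_sum (Finset.range (j + 1)) (fun i => q ^ i) (q ^ j)
        (fun i hi => pow_le_pow_of_le_one hq0.le hq1.le
          (Nat.lt_succ_iff.mp (Finset.mem_range.mp hi)))
      simpa [Finset.card_range, nsmul_eq_mul, add_comm] using h
    have hPge : (Nat.factorial k : ℝ) * q ^ (k * (k - 1) / 2) ≤ P := by
      have h1 : ∏ j ∈ range k, (((j : ℝ) + 1) * q ^ j) ≤ P := by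
        apply Finset.prod_le_prod
        · intro j _; positivity
        · intro j _; exact hterm j
      calc (Nat.factorial k : ℝ) * q ^ (k * (k - 1) / 2)
          = ∏ j ∈ range k, (((j : ℝ) + 1) * q ^ j) := by
            rw [Finset.prod_mul_distrib, Finset.prod_pow_eq_pow_sum,
              Finset.sum_range_id, ← Finset.prod_range_add_one_eq_factorial k]
            push_cast; ring
        _ ≤ P := h1
    have hPpos : 0 < P := by
      apply Finset.prod_pos
      intro j _
      apply Finset.sum_pos
      · intro i _; positivity
      · exact Finset.nonempty_range_add_one
    rw [hcast]
    have hnorm : ‖(q : ℂ) ^ (k * (k - 1) / 2) * z ^ k / ((P : ℝ) : ℂ)‖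
        = q ^ (k * (k - 1) / 2) * ‖z‖ ^ k / P := by
      rw [norm_div, norm_mul, norm_pow, norm_pow, Complex.norm_real, Complex.norm_real,
        Real.norm_eq_abs, Real.norm_eq_abs, abs_of_pos hq0, abs_of_pos hPpos]
    rw [hnorm]
    rw [div_le_div_iff₀ hPpos (by positivity : (0:ℝ) < (Nat.factorial k : ℝ))]
    calc q ^ (k * (k - 1) / 2) * ‖z‖ ^ k * (Nat.factorial k : ℝ)
        = ‖z‖ ^ k * ((Nat.factorial k : ℝ) * q ^ (k * (k - 1) / 2)) := by ring
      _ ≤ ‖z‖ ^ k * P := by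
          exact mul_le_mul_of_nonneg_left hPge (by positivity)
end

section
/- Let 0 < q < 1 and let z be a nonzero complex number. Then |E_q(z)| ≤ exp( −(log|z/q|)² / (2 log q) ) / (q^{1/2}; q)_∞, where (q^{1/2};q)_∞ = ∏_{k=0}^∞ (1 − q^{k+1/2}). (Note log q < 0, so the exponent is nonnegative.) -/
open scoped BigOperators
open Finset Filter

/-- `(q;q)_k⁻¹` -/
noncomputable def pqi (q : ℝ) (k : ℕ) : ℝ := (∏ j ∈ Finset.range k, (1 - q ^ (j+1)))⁻¹

lemma qpow_lt_one {q : ℝ} (hq0 : 0 < q) (hq1 : q < 1) (j : ℕ) : q ^ (j+1) < 1 :=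
  pow_lt_one₀ hq0.le hq1 (Nat.succ_ne_zero j)

lemma pqi_pos {q : ℝ} (hq0 : 0 < q) (hq1 : q < 1) (k : ℕ) : 0 < pqi q k := by
  apply inv_pos.2
  exact Finset.prod_pos fun j _ => by have := qpow_lt_one hq0 hq1 j; linarith

lemma pqi_rec {q : ℝ} (hq0 : 0 < q) (hq1 : q < 1) (k : ℕ) :
    pqi q (k+1) * (1 - q ^ (k+1)) = pqi q k := by
  have hne : (1 - q ^ (k+1)) ≠ 0 := by have := qpow_lt_one hq0 hq1 k; linarith
  rw [pqi, pqi, Finset.prod_range_succ, mul_inv, mul_assoc, inv_mul_cancel₀ hne, mul_one]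

/-- Key functional identity for partial sums of the q-exponential-type series. -/
lemma euler_id {q : ℝ} (hq0 : 0 < q) (hq1 : q < 1) (N : ℕ) (y : ℝ) :
    ∑ k ∈ Finset.range (N+1), (q*y)^k * pqi q k
      = (1-y) * (∑ k ∈ Finset.range (N+1), y^k * pqi q k) + pqi q N * y^(N+1) := by
  induction N with
  | zero => simp [pqi]
  | succ N ih =>
      rw [Finset.sum_range_succ, Finset.sum_range_succ (f := fun k => y^k * pqi q k), ih]
      have hrec := pqi_rec hq0 hq1 N
      linear_combination -(y:ℝ)^(N+1) * hrec


lemma fq_pos {q x : ℝ} (hq0 : 0 < q) (hq1 : q < 1) (hx0 : 0 < x) (hx1 : x < 1) (j : ℕ) :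
    0 < 1 - x * q ^ j := by
  have h1 : q ^ j ≤ 1 := pow_le_one₀ hq0.le hq1.le
  have h2 : x * q ^ j < 1 := by nlinarith [pow_pos hq0 j]
  linarith

lemma prod_lb {q x : ℝ} (hq0 : 0 < q) (hq1 : q < 1) (hx0 : 0 < x) (hx1 : x < 1) (s : Finset ℕ) :
    Real.exp (-(x / ((1-x) * (1-q)))) ≤ ∏ j ∈ s, (1 - x * q ^ j) := by
  have key : ∀ j : ℕ, Real.exp (-(x/(1-x) * q ^ j)) ≤ 1 - x * q ^ j := by
    intro j
    have hfj := fq_pos hq0 hq1 hx0 hx1 j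
    have hqj : 0 < q ^ j := pow_pos hq0 j
    have hqj1 : q ^ j ≤ 1 := pow_le_one₀ hq0.le hq1.le
    set t := x * q ^ j with ht
    have ht0 : 0 < t := mul_pos hx0 hqj
    have ht1 : t < 1 := by linarith
    have hu : t / (1 - t) ≤ x/(1-x) * q ^ j := by
      rw [div_le_iff₀ (by linarith)]
      rw [div_mul_eq_mul_div, div_mul_eq_mul_div, le_div_iff₀ (by linarith)]
      nlinarith [mul_nonneg (mul_nonneg hx0.le hqj.le) (mul_nonneg hx0.le (sub_nonneg.2 hqj1)), ht]
    have h1 : Real.exp (-(t / (1-t))) ≤ 1 - t := by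
      have h2 : (t/(1-t)) + 1 ≤ Real.exp (t/(1-t)) := Real.add_one_le_exp _
      have h4 : (0:ℝ) < t/(1-t) + 1 := by
        have : 0 ≤ t/(1-t) := div_nonneg ht0.le (by linarith)
        linarith
      rw [Real.exp_neg]
      have h5 : (Real.exp (t/(1-t)))⁻¹ ≤ (t/(1-t) + 1)⁻¹ :=
        inv_anti₀ h4 h2
      have h6 : (t/(1-t) + 1)⁻¹ = 1 - t := by
        have hne : (1:ℝ) - t ≠ 0 := by linarith
        field_simp
        ring
      linarith
    calc Real.exp (-(x/(1-x) * q ^ j)) ≤ Real.exp (-(t/(1-t))) := by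
          apply Real.exp_le_exp.2; linarith
      _ ≤ 1 - t := h1
  calc Real.exp (-(x / ((1-x) * (1-q))))
      ≤ Real.exp (-(x/(1-x) * ∑ j ∈ s, q ^ j)) := by
        apply Real.exp_le_exp.2
        have hsum : ∑ j ∈ s, q ^ j ≤ (1-q)⁻¹ := by
          have := (summable_geometric_of_lt_one hq0.le hq1).sum_le_tsum s
            (fun j _ => (pow_pos hq0 j).le)
          rwa [tsum_geometric_of_lt_one hq0.le hq1] at this
        have hx' : 0 ≤ x/(1-x) := div_nonneg hx0.le (by linarith)
        have h7 : x/(1-x) * ∑ j ∈ s, q ^ j ≤ x/(1-x) * (1-q)⁻¹ :=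
          mul_le_mul_of_nonneg_left hsum hx'
        have heq : x/(1-x) * (1-q)⁻¹ = x / ((1-x)*(1-q)) := by
          rw [← div_eq_mul_inv, div_div]
        linarith [heq ▸ h7]
      _ ≤ ∏ j ∈ s, (1 - x * q ^ j) := by
        have hrw : -(x/(1-x) * ∑ j ∈ s, q ^ j) = ∑ j ∈ s, -(x/(1-x) * q ^ j) := by
          rw [Finset.mul_sum, ← Finset.sum_neg_distrib]
        rw [hrw, Real.exp_sum]
        exact Finset.prod_le_prod (fun j _ => (Real.exp_pos _).le) (fun j _ => key j)

lemma multipliable_fq {q x : ℝ} (hq0 : 0 < q) (hq1 : q < 1) (hx0 : 0 < x) (hx1 : x < 1) :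
    Multipliable (fun k : ℕ => 1 - x * q ^ k) := by
  have hanti : Antitone (fun s : Finset ℕ => ∏ j ∈ s, (1 - x * q ^ j)) := by
    intro s t hst
    simp only
    rw [← Finset.prod_sdiff hst]
    apply mul_le_of_le_one_left
    · exact Finset.prod_nonneg fun j _ => (fq_pos hq0 hq1 hx0 hx1 j).le
    · exact Finset.prod_le_one (fun j _ => (fq_pos hq0 hq1 hx0 hx1 j).le)
        (fun j _ => by nlinarith [mul_pos hx0 (pow_pos hq0 j)])
  have hbdd : BddBelow (Set.range fun s : Finset ℕ => ∏ j ∈ s, (1 - x * q ^ j)) := by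
    refine ⟨0, ?_⟩
    rintro y ⟨s, rfl⟩
    exact Finset.prod_nonneg fun j _ => (fq_pos hq0 hq1 hx0 hx1 j).le
  exact ⟨_, tendsto_atTop_ciInf hanti hbdd⟩

lemma tprod_fq_pos {q x : ℝ} (hq0 : 0 < q) (hq1 : q < 1) (hx0 : 0 < x) (hx1 : x < 1) :
    0 < ∏' k : ℕ, (1 - x * q ^ k) := by
  have := le_hasProd_of_le_prod (multipliable_fq hq0 hq1 hx0 hx1).hasProd
    (prod_lb hq0 hq1 hx0 hx1)
  exact lt_of_lt_of_le (Real.exp_pos _) this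

lemma euler_step {q x : ℝ} (hq0 : 0 < q) (hq1 : q < 1) (hx0 : 0 < x) (hx1 : x < 1) (N m : ℕ) :
    (∑ k ∈ Finset.range (N+1), x^k * pqi q k) * ∏ j ∈ Finset.range m, (1 - x * q ^ j)
      ≤ ∑ k ∈ Finset.range (N+1), (q^m * x)^k * pqi q k := by
  induction m with
  | zero => simp
  | succ m ih =>
      have hy0 : 0 < q^m * x := mul_pos (pow_pos hq0 m) hx0
      have hy1 : q^m * x < 1 := by nlinarith [pow_le_one₀ hq0.le hq1.le (n := m)]
      have hfq : 0 < 1 - x * q ^ m := fq_pos hq0 hq1 hx0 hx1 m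
      have hid := euler_id hq0 hq1 N (q^m * x)
      have hnn : 0 ≤ pqi q N * (q^m*x)^(N+1) :=
        mul_nonneg (pqi_pos hq0 hq1 N).le (pow_nonneg hy0.le _)
      calc (∑ k ∈ Finset.range (N+1), x^k * pqi q k) * ∏ j ∈ Finset.range (m+1), (1 - x * q ^ j)
          = ((∑ k ∈ Finset.range (N+1), x^k * pqi q k) * ∏ j ∈ Finset.range m, (1 - x * q ^ j))
              * (1 - x * q ^ m) := by rw [Finset.prod_range_succ, mul_assoc]
        _ ≤ (∑ k ∈ Finset.range (N+1), (q^m * x)^k * pqi q k) * (1 - x * q ^ m) :=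
            mul_le_mul_of_nonneg_right ih hfq.le
        _ = (1 - q^m * x) * (∑ k ∈ Finset.range (N+1), (q^m * x)^k * pqi q k) := by
            rw [mul_comm x (q^m), mul_comm]
        _ ≤ ∑ k ∈ Finset.range (N+1), (q * (q^m * x))^k * pqi q k := by linarith [hid]
        _ = ∑ k ∈ Finset.range (N+1), (q^(m+1) * x)^k * pqi q k := by
            apply Finset.sum_congr rfl; intro k _; ring_nf

lemma euler_ineq {q x : ℝ} (hq0 : 0 < q) (hq1 : q < 1) (hx0 : 0 < x) (hx1 : x < 1) (N : ℕ) :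
    ∑ k ∈ Finset.range (N+1), x^k * pqi q k ≤ (∏' k : ℕ, (1 - x * q ^ k))⁻¹ := by
  set P := ∏' k : ℕ, (1 - x * q ^ k) with hP
  have hPpos := tprod_fq_pos hq0 hq1 hx0 hx1
  have hmult := multipliable_fq hq0 hq1 hx0 hx1
  set S := ∑ k ∈ Finset.range (N+1), x^k * pqi q k with hS
  have key : S * P ≤ 1 := by
    have T1 : Tendsto (fun m => S * ∏ j ∈ Finset.range m, (1 - x * q ^ j))
        atTop (nhds (S * P)) :=
      (hmult.hasProd.tendsto_prod_nat).const_mul S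
    have T2 : Tendsto (fun m => ∑ k ∈ Finset.range (N+1), (q^m * x)^k * pqi q k)
        atTop (nhds 1) := by
      have h0 : Tendsto (fun m : ℕ => q^m * x) atTop (nhds 0) := by
        simpa using (tendsto_pow_atTop_nhds_zero_of_lt_one hq0.le hq1).mul_const x
      have hcont : Continuous (fun y : ℝ => ∑ k ∈ Finset.range (N+1), y^k * pqi q k) := by
        apply continuous_finset_sum
        intro k _
        exact (continuous_pow k).mul continuous_const
      have := (hcont.tendsto 0).comp h0
      have h1 : (∑ k ∈ Finset.range (N+1), (0:ℝ)^k * pqi q k) = 1 := by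
        rw [Finset.sum_eq_single 0]
        · simp [pqi]
        · intro b _ hb; simp [zero_pow hb]
        · intro h; exact absurd (Finset.mem_range.2 (Nat.succ_pos N)) h
      rw [h1] at this
      exact this
    exact le_of_tendsto_of_tendsto' T1 T2 (fun m => euler_step hq0 hq1 hx0 hx1 N m)
  rw [← one_div]
  exact (le_div_iff₀ hPpos).2 key

lemma core_bound {q r : ℝ} (hq0 : 0 < q) (hq1 : q < 1) (hr : 0 < r) (k : ℕ) :
    q ^ (k*(k-1)/2) * r ^ k
      ≤ Real.exp (-(Real.log (r/q))^2 / (2 * Real.log q)) * Real.sqrt q ^ k := by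
  set a := Real.log q with ha'
  set b := Real.log r with hb'
  have ha : a < 0 := Real.log_neg hq0 hq1
  have hlog : Real.log (r/q) = b - a := Real.log_div hr.ne' hq0.ne'
  have hcast : ((k*(k-1)/2 : ℕ) : ℝ) * 2 = (k:ℝ) * ((k:ℝ) - 1) := by
    cases k with
    | zero => simp
    | succ m =>
        have h1 : (m+1)*((m+1)-1) = m*(m+1) := by simp [Nat.mul_comm]
        have h2 : m*(m+1)/2*2 = m*(m+1) := Nat.div_mul_cancel (Nat.even_mul_succ_self m).two_dvd
        have h3 : ((m*(m+1)/2 : ℕ) : ℝ) * 2 = ((m*(m+1) : ℕ) : ℝ) := by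
          exact_mod_cast congrArg (Nat.cast (R := ℝ)) h2
        rw [h1, h3]
        push_cast
        ring
  have e1 : q ^ (k*(k-1)/2) = Real.exp (((k*(k-1)/2 : ℕ):ℝ) * a) := by
    rw [Real.exp_nat_mul, Real.exp_log hq0]
  have e2 : r ^ k = Real.exp ((k:ℝ) * b) := by
    rw [Real.exp_nat_mul, Real.exp_log hr]
  have e3 : Real.sqrt q ^ k = Real.exp ((k:ℝ) * (a/2)) := by
    have : Real.sqrt q = Real.exp (a/2) := by
      rw [Real.sqrt_eq_rpow, Real.rpow_def_of_pos hq0]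
      norm_num
      ring_nf
      rw [ha']
    rw [this, Real.exp_nat_mul]
  rw [e1, e2, e3, hlog, ← Real.exp_add, ← Real.exp_add, Real.exp_le_exp]
  have hD : (-(b-a)^2 / (2*a)) * (2*a) = -(b-a)^2 :=
    div_mul_cancel₀ _ (by linarith : (2:ℝ)*a ≠ 0)
  have hn : ((k*(k-1)/2 : ℕ) : ℝ) = (k:ℝ) * ((k:ℝ) - 1) / 2 := by linarith [hcast]
  rw [hn]
  nlinarith [sq_nonneg (a*(k:ℝ) + b - a), hD, mul_pos (neg_pos.2 ha) (neg_pos.2 ha),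
    sq_nonneg ((k:ℝ)), Nat.cast_nonneg (α := ℝ) k]

/-- For `0 < q < 1` and nonzero `z : ℂ`,
`|E_q(z)| ≤ exp(-(log|z/q|)²/(2 log q)) / (q^{1/2};q)_∞`,
where `(q^{1/2};q)_∞ = ∏_{k=0}^∞ (1 - q^{k+1/2}) = ∏_{k=0}^∞ (1 - √q · q^k)`. -/
theorem stmt5 (q : ℝ) (hq0 : 0 < q) (hq1 : q < 1) (z : ℂ) (hz : z ≠ 0) :
    ‖∑' k : ℕ, (q : ℂ) ^ (k * (k - 1) / 2) * z ^ k /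
        ∏ j ∈ Finset.range k, (1 - (q : ℂ) ^ (j + 1))‖ ≤
      Real.exp (-(Real.log (‖z‖ / q)) ^ 2 / (2 * Real.log q)) /
        ∏' k : ℕ, (1 - Real.sqrt q * q ^ k) := by
  set r := ‖z‖ with hrdef
  have hr : 0 < r := norm_pos_iff.mpr hz
  set x := Real.sqrt q with hxdef
  have hx0 : 0 < x := Real.sqrt_pos.2 hq0
  have hx1 : x < 1 := by
    rw [hxdef]
    exact (Real.sqrt_lt' one_pos).2 (by nlinarith)
  set M := Real.exp (-(Real.log (r/q))^2 / (2 * Real.log q)) with hMdef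
  have hM : 0 < M := Real.exp_pos _
  set P := ∏' k : ℕ, (1 - x * q ^ k) with hPdef
  have hPpos : 0 < P := tprod_fq_pos hq0 hq1 hx0 hx1
  set f : ℕ → ℂ := fun k => (q : ℂ) ^ (k * (k - 1) / 2) * z ^ k /
      ∏ j ∈ Finset.range k, (1 - (q : ℂ) ^ (j + 1)) with hfdef
  have hprodpos : ∀ k : ℕ, 0 < ∏ j ∈ Finset.range k, (1 - q ^ (j+1)) := by
    intro k
    exact Finset.prod_pos fun j _ => by have := qpow_lt_one hq0 hq1 j; linarith
  have hnorm : ∀ k, ‖f k‖ = q ^ (k*(k-1)/2) * r ^ k * pqi q k := by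
    intro k
    have hprod : (∏ j ∈ Finset.range k, (1 - (q:ℂ)^(j+1)))
        = ((∏ j ∈ Finset.range k, (1 - q^(j+1)) : ℝ) : ℂ) := by
      rw [Complex.ofReal_prod]
      exact Finset.prod_congr rfl fun j _ => by push_cast; ring
    rw [hfdef]
    simp only
    rw [norm_div, norm_mul, norm_pow, hprod, Complex.norm_real, Complex.norm_real, Real.norm_eq_abs,
      Real.norm_eq_abs, abs_of_pos hq0, abs_of_pos (hprodpos k), pqi, div_eq_mul_inv, norm_pow]
  have hterm : ∀ k, ‖f k‖ ≤ M * (x ^ k * pqi q k) := by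
    intro k
    rw [hnorm k]
    have h1 : q ^ (k*(k-1)/2) * r ^ k ≤ M * x ^ k := core_bound hq0 hq1 hr k
    calc q ^ (k*(k-1)/2) * r ^ k * pqi q k ≤ (M * x ^ k) * pqi q k :=
          mul_le_mul_of_nonneg_right h1 (pqi_pos hq0 hq1 k).le
      _ = M * (x ^ k * pqi q k) := by ring
  have hpartial : ∀ n, ∑ k ∈ Finset.range n, ‖f k‖ ≤ M * P⁻¹ := by
    intro n
    have hS : ∑ k ∈ Finset.range n, x ^ k * pqi q k ≤ P⁻¹ := by
      cases n with
      | zero => simp; positivity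
      | succ N => exact euler_ineq hq0 hq1 hx0 hx1 N
    calc ∑ k ∈ Finset.range n, ‖f k‖
        ≤ ∑ k ∈ Finset.range n, M * (x ^ k * pqi q k) :=
          Finset.sum_le_sum fun k _ => hterm k
      _ = M * ∑ k ∈ Finset.range n, x ^ k * pqi q k := by rw [Finset.mul_sum]
      _ ≤ M * P⁻¹ := mul_le_mul_of_nonneg_left hS hM.le
  have hsum : Summable (fun k => ‖f k‖) :=
    summable_of_sum_range_le (fun k => norm_nonneg _) hpartial
  have hsum' : Summable (fun k => ‖f k‖) := by simpa using hsum
  calc ‖∑' k, f k‖ = ‖∑' k, f k‖ := rfl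
    _ ≤ ∑' k, ‖f k‖ := norm_tsum_le_tsum_norm hsum'
    _ = ∑' k, ‖f k‖ := by simp
    _ ≤ M * P⁻¹ := hsum.tsum_le_of_sum_range_le hpartial
    _ = M / P := (div_eq_mul_inv _ _).symm
end

section
/- Let 0 < q < 1 and let z be a nonzero complex number. Then |θ₃(z;q)| ≤ ( (q²;q²)_∞ / ( (q;q²)_∞² · q^{1/2} ) ) · exp( −(log|z|)² / (2 log q) ), where (q²;q²)_∞ = ∏_{k=0}^∞ (1 − q^{2k+2}) and (q;q²)_∞ = ∏_{k=0}^∞ (1 − q^{2k+1}). (Note log q < 0, so the exponent is nonnegative.) -/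
open scoped BigOperators

private lemma stmt6_aux_poly (s : ℝ) (h0 : 0 < s) (h1 : s < 1) :
    (1 - s ^ 2 + 2 * s) * (1 - s ^ 6) * s ≤ 1 + s ^ 2 := by
  have h2 : (1 - s ^ 2 + 2 * s) ≤ 2 := by nlinarith [sq_nonneg (1 - s)]
  have h3 : (0:ℝ) ≤ s - s ^ 7 := by
    nlinarith [pow_le_one₀ h0.le h1.le (n := 7),
      pow_le_pow_of_le_one h0.le h1.le (by norm_num : 1 ≤ 7)]
  nlinarith [mul_le_mul_of_nonneg_right h2 h3, sq_nonneg (1 - s), pow_pos h0 7]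

/-- For `0 < q < 1` and nonzero `z : ℂ`,
`|θ₃(z;q)| = |∑_{k∈ℤ} q^{k²} z^k| ≤ ((q²;q²)_∞ / ((q;q²)_∞² √q)) · exp(-(log|z|)²/(2 log q))`. -/
theorem stmt6 (q : ℝ) (hq0 : 0 < q) (hq1 : q < 1) (z : ℂ) (hz : z ≠ 0) :
    ‖∑' k : ℤ, (q : ℂ) ^ (k ^ 2) * z ^ k‖ ≤
      (∏' k : ℕ, (1 - q ^ (2 * k + 2))) /
        ((∏' k : ℕ, (1 - q ^ (2 * k + 1))) ^ 2 * Real.sqrt q) *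
        Real.exp (-(Real.log ‖z‖) ^ 2 / (2 * Real.log q)) := by
  have hzp : ∀ (a : ℝ), 0 < a → ∀ m : ℤ, a ^ m = Real.exp (Real.log a * m) := by
    intro a ha m; rw [← Real.rpow_intCast, Real.rpow_def_of_pos ha]
  set lq := Real.log q with hlqdef
  have hlq : lq < 0 := Real.log_neg hq0 hq1
  have hlqne : lq ≠ 0 := ne_of_lt hlq
  set x := ‖z‖ with hxdef
  have hx : 0 < x := norm_pos_iff.mpr hz
  set L := Real.log x with hLdef
  set s := Real.sqrt q with hsdef
  have hs0 : 0 < s := Real.sqrt_pos.mpr hq0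
  have hs1 : s < 1 := by
    rw [hsdef, show (1:ℝ) = Real.sqrt 1 by rw [Real.sqrt_one]]
    exact Real.sqrt_lt_sqrt hq0.le hq1
  have hsq : s ^ 2 = q := Real.sq_sqrt hq0.le
  have hsexp : s = Real.exp (lq / 2) := by
    rw [hsdef, hlqdef, Real.sqrt_eq_rpow, Real.rpow_def_of_pos hq0]
    ring_nf
  have hqexp : q = Real.exp lq := (Real.exp_log hq0).symm
  have h1q : (0:ℝ) < 1 - q := by linarith
  set E := Real.exp (-L ^ 2 / (2 * lq)) with hEdef
  have hE : 0 < E := Real.exp_pos _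
  set f : ℤ → ℝ := fun k => Real.exp (lq * (k : ℝ) ^ 2 + L * k) with hfdef
  set g : ℤ → ℝ := fun k => Real.exp (lq / 2 * (k : ℝ) ^ 2) with hgdef
  -- pointwise bound f ≤ E * g
  have hfg : ∀ k : ℤ, f k ≤ E * g k := by
    intro k
    rw [hfdef, hgdef, hEdef]
    simp only []
    rw [← Real.exp_add]
    apply Real.exp_le_exp.mpr
    have h2 : (lq * k + L) ^ 2 / (2 * lq) ≤ 0 :=
      div_nonpos_of_nonneg_of_nonpos (sq_nonneg _) (by linarith)
    have h3 : lq * (k : ℝ) ^ 2 + L * k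
        = -L ^ 2 / (2 * lq) + lq / 2 * (k : ℝ) ^ 2 + (lq * k + L) ^ 2 / (2 * lq) := by
      field_simp
      ring
    linarith
  -- summability of gaussian-type sums over ℕ
  have hgnat : ∀ (u : ℕ → ℝ), (∀ n : ℕ, (n : ℝ) ≤ (u n) ^ 2) →
      Summable (fun n : ℕ => Real.exp (lq / 2 * (u n) ^ 2)) := by
    intro u hu
    refine Summable.of_nonneg_of_le (fun n => (Real.exp_pos _).le) (fun n => ?_)
      (summable_geometric_of_lt_one (Real.exp_pos (lq / 2)).le
        (Real.exp_lt_one_iff.mpr (by linarith)))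
    rw [← Real.exp_nat_mul]
    apply Real.exp_le_exp.mpr
    have h4 : ((u n) ^ 2 - (n : ℝ)) * lq ≤ 0 :=
      mul_nonpos_of_nonneg_of_nonpos (sub_nonneg.mpr (hu n)) hlq.le
    linarith
  have hg1 : Summable fun n : ℕ => g n := by
    apply (hgnat (fun n => (n : ℝ)) ?_).congr
    · intro n; simp [hgdef]
    · intro n
      have h5 : (n : ℝ) ≤ ((n ^ 2 : ℕ) : ℝ) := Nat.cast_le.mpr (Nat.le_self_pow two_ne_zero n)
      push_cast at h5
      linarith
  have hg2 : Summable fun n : ℕ => g (-(n + 1)) := by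
    apply (hgnat (fun n => (n : ℝ) + 1) ?_).congr
    · intro n; simp only [hgdef]; push_cast; ring_nf
    · intro n; show (n:ℝ) ≤ ((n:ℝ)+1)^2
      nlinarith [Nat.cast_nonneg (α := ℝ) n, sq_nonneg ((n:ℝ))]
  have hg : Summable g := Summable.of_nat_of_neg_add_one hg1 hg2
  have hsumf : Summable f :=
    Summable.of_nonneg_of_le (fun k => (Real.exp_pos _).le) hfg (hg.mul_left E)
  -- norm identity
  have hnorm : ∀ k : ℤ, ‖(q : ℂ) ^ (k ^ 2) * z ^ k‖ = f k := by
    intro k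
    rw [norm_mul, norm_zpow, norm_zpow, Complex.norm_real, Real.norm_eq_abs, abs_of_pos hq0, ← hxdef,
      hzp q hq0, hzp x hx, ← Real.exp_add, hfdef]
    push_cast
    ring_nf
    rw [hLdef, hlqdef]; ring_nf
  -- bound the ℤ-sum of g
  have htailsum : Summable (fun n : ℕ => Real.exp (lq / 2 * ((n : ℝ) + 1) ^ 2)) := by
    apply hgnat (fun n => (n : ℝ) + 1)
    intro n; show (n:ℝ) ≤ ((n:ℝ)+1)^2
    nlinarith [Nat.cast_nonneg (α := ℝ) n, sq_nonneg ((n:ℝ))]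
  have htail : ∑' n : ℕ, Real.exp (lq / 2 * ((n : ℝ) + 1) ^ 2) ≤ s * (1 - q)⁻¹ := by
    have hb : Summable (fun n : ℕ => s * q ^ n) :=
      (summable_geometric_of_lt_one hq0.le hq1).mul_left s
    have hle : ∀ n : ℕ, Real.exp (lq / 2 * ((n : ℝ) + 1) ^ 2) ≤ s * q ^ n := by
      intro n
      have h1 : Real.exp (lq / 2 * ((n : ℝ) + 1) ^ 2) ≤ Real.exp (lq / 2 + lq * n) := by
        apply Real.exp_le_exp.mpr
        have h4 : ((((n:ℝ)+1)^2 - 1 - 2*n)) * (lq/2) ≤ 0 := by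
          apply mul_nonpos_of_nonneg_of_nonpos _ (by linarith)
          nlinarith [sq_nonneg ((n:ℝ))]
        nlinarith [h4]
      calc Real.exp (lq / 2 * ((n : ℝ) + 1) ^ 2) ≤ Real.exp (lq / 2 + lq * n) := h1
        _ = s * q ^ n := by
            rw [Real.exp_add, ← hsexp, mul_comm lq (n:ℝ), Real.exp_nat_mul, ← hqexp]
    calc ∑' n : ℕ, Real.exp (lq / 2 * ((n : ℝ) + 1) ^ 2) ≤ ∑' n : ℕ, s * q ^ n :=
          Summable.tsum_le_tsum hle htailsum hb
      _ = s * (1 - q)⁻¹ := by rw [tsum_mul_left, tsum_geometric_of_lt_one hq0.le hq1]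
  have hgsum : ∑' k : ℤ, g k ≤ 1 + 2 * (s * (1 - q)⁻¹) := by
    have hsplit : ∑' k : ℤ, g k = (∑' n : ℕ, g n) + ∑' n : ℕ, g (-(n + 1)) :=
      tsum_of_nat_of_neg_add_one hg1 hg2
    have hhead : ∑' n : ℕ, g n = 1 + ∑' n : ℕ, g ((n : ℤ) + 1) := by
      rw [Summable.tsum_eq_zero_add hg1]
      norm_num [hgdef]
    have ht1 : ∑' n : ℕ, g ((n : ℤ) + 1) ≤ s * (1 - q)⁻¹ := by
      refine le_of_eq_of_le (tsum_congr fun n => ?_) htail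
      simp only [hgdef]; push_cast; ring_nf
    have ht2 : ∑' n : ℕ, g (-(n + 1)) ≤ s * (1 - q)⁻¹ := by
      refine le_of_eq_of_le (tsum_congr fun n => ?_) htail
      simp only [hgdef]; push_cast; ring_nf
    linarith [hsplit, hhead, ht1, ht2]
  -- infinite products
  have hpowlt : ∀ m : ℕ, m ≠ 0 → q ^ m < 1 := fun m hm => pow_lt_one₀ hq0.le hq1 hm
  have hfk1 : ∀ k : ℕ, 0 < 1 - q ^ (2 * k + 1) := by
    intro k; have := hpowlt (2 * k + 1) (by omega); linarith
  have hfk2 : ∀ k : ℕ, 0 < 1 - q ^ (2 * k + 2) := by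
    intro k; have := hpowlt (2 * k + 2) (by omega); linarith
  set a : ℕ → ℝ := fun k => Real.log (1 - q ^ (2 * k + 1)) with hadef
  set b : ℕ → ℝ := fun k => Real.log (1 - q ^ (2 * k + 2)) with hbdef
  have hqpow_le : ∀ m : ℕ, 1 ≤ m → q ^ m ≤ q := by
    intro m hm
    calc q ^ m ≤ q ^ 1 := pow_le_pow_of_le_one hq0.le hq1.le hm
      _ = q := pow_one q
  have hanonpos : ∀ k, a k ≤ 0 := by
    intro k
    apply Real.log_nonpos (by linarith [hfk1 k])
    have := pow_pos hq0 (2 * k + 1); linarith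
  have hbnonpos : ∀ k, b k ≤ 0 := by
    intro k
    apply Real.log_nonpos (by linarith [hfk2 k])
    have := pow_pos hq0 (2 * k + 2); linarith
  have hbound : ∀ k : ℕ, -a k ≤ q ^ (2 * k + 1) / (1 - q) := by
    intro k
    have hy1 : q ^ (2 * k + 1) ≤ q := hqpow_le _ (by omega)
    have hy0 : 0 < q ^ (2 * k + 1) := pow_pos hq0 _
    have h2 : -a k = Real.log ((1 - q ^ (2 * k + 1))⁻¹) := by
      rw [Real.log_inv]
    rw [h2]
    have h3 := Real.log_le_sub_one_of_pos (inv_pos.mpr (hfk1 k))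
    have h4 : (1 - q ^ (2 * k + 1))⁻¹ - 1 = q ^ (2 * k + 1) / (1 - q ^ (2 * k + 1)) := by
      rw [inv_eq_one_div, div_sub_one (ne_of_gt (hfk1 k))]
      ring_nf
    have h5 : q ^ (2 * k + 1) / (1 - q ^ (2 * k + 1)) ≤ q ^ (2 * k + 1) / (1 - q) := by
      gcongr
    linarith
  have hgeo : Summable (fun k : ℕ => q ^ (2 * k + 1) / (1 - q)) := by
    have : Summable (fun k : ℕ => (q ^ 2) ^ k * (q / (1 - q))) :=
      (summable_geometric_of_lt_one (by positivity) (by nlinarith)).mul_right _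
    apply this.congr
    intro k
    rw [pow_add, ← pow_mul, pow_one]
    ring
  have hsan : Summable (fun k => -a k) :=
    Summable.of_nonneg_of_le (fun k => by linarith [hanonpos k]) hbound hgeo
  have hsa : Summable a := by simpa using hsan.neg
  have hsbn : Summable (fun k => -b k) := by
    refine Summable.of_nonneg_of_le (fun k => by linarith [hbnonpos k]) (fun k => ?_) hsan
    have : a k ≤ b k := by
      apply Real.log_le_log (hfk1 k)
      have : q ^ (2 * k + 2) ≤ q ^ (2 * k + 1) :=
        pow_le_pow_of_le_one hq0.le hq1.le (by omega)
      linarith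
    linarith
  have hsb : Summable b := by simpa using hsbn.neg
  have hP1 : (∏' k : ℕ, (1 - q ^ (2 * k + 1))) = Real.exp (∑' k, a k) := by
    have h := hsa.hasSum.rexp
    rw [show (Real.exp ∘ a) = fun k : ℕ => 1 - q ^ (2 * k + 1) from
      funext fun k => Real.exp_log (hfk1 k)] at h
    exact h.tprod_eq
  have hP2 : (∏' k : ℕ, (1 - q ^ (2 * k + 2))) = Real.exp (∑' k, b k) := by
    have h := hsb.hasSum.rexp
    rw [show (Real.exp ∘ b) = fun k : ℕ => 1 - q ^ (2 * k + 2) from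
      funext fun k => Real.exp_log (hfk2 k)] at h
    exact h.tprod_eq
  have hA1le : (∑' k, a k) ≤ Real.log (1 - q) + Real.log (1 - q ^ 3) := by
    have h6 := Summable.sum_le_tsum ({0, 1} : Finset ℕ) (fun i _ => by linarith [hanonpos i]) hsan
    rw [Finset.sum_insert (by norm_num), Finset.sum_singleton, tsum_neg] at h6
    have ha0 : a 0 = Real.log (1 - q) := by simp [hadef]
    have ha1 : a 1 = Real.log (1 - q ^ 3) := by norm_num [hadef]
    linarith
  have hA2ge : Real.log (1 + q) + (∑' k, a k) ≤ (∑' k, b k) := by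
    have hsub : Summable (fun k => b k - a k) := hsb.sub hsa
    have h7 := Summable.le_tsum hsub 0 (fun i _ => ?_)
    · rw [Summable.tsum_sub hsb hsa] at h7
      have h8 : b 0 - a 0 = Real.log (1 + q) := by
        have e1 : (1 : ℝ) - q ^ (2 * 0 + 2) = (1 + q) * (1 - q ^ (2 * 0 + 1)) := by ring
        simp only [hbdef, hadef, e1]
        rw [Real.log_mul (by linarith) (by norm_num; linarith [hfk1 0])]
        norm_num
      linarith
    · have : q ^ (2 * i + 2) ≤ q ^ (2 * i + 1) :=
        pow_le_pow_of_le_one hq0.le hq1.le (by omega)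
      have := Real.log_le_log (hfk1 i) (by linarith : (1 - q ^ (2 * i + 1)) ≤ 1 - q ^ (2 * i + 2))
      simp only [hbdef, hadef]
      linarith
  set P₁ := ∏' k : ℕ, (1 - q ^ (2 * k + 1)) with hP1def
  set P₂ := ∏' k : ℕ, (1 - q ^ (2 * k + 2)) with hP2def
  have hP1pos : 0 < P₁ := by rw [hP1]; exact Real.exp_pos _
  have hP1le : P₁ ≤ (1 - q) * (1 - q ^ 3) := by
    rw [hP1]
    calc Real.exp (∑' k, a k) ≤ Real.exp (Real.log (1 - q) + Real.log (1 - q ^ 3)) :=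
          Real.exp_le_exp.mpr hA1le
      _ = (1 - q) * (1 - q ^ 3) := by
          rw [Real.exp_add, Real.exp_log h1q, Real.exp_log (by linarith [hpowlt 3 (by omega)])]
  have hP2ge : (1 + q) * P₁ ≤ P₂ := by
    rw [hP1, hP2, ← Real.exp_log (by linarith : (0:ℝ) < 1 + q), ← Real.exp_add]
    exact Real.exp_le_exp.mpr hA2ge
  -- the elementary inequality
  have h1q3 : (0:ℝ) < 1 - q ^ 3 := by linarith [hpowlt 3 (by omega)]
  clear_value lq x L s E f g a b P₁ P₂
  clear hP1 hP2 hA1le hA2ge hsa hsb hsan hsbn hbound hanonpos hbnonpos hadef hbdef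
  clear a b hgeo hqpow_le hpowlt hfk1 hfk2 hzp htail htailsum hgnat
  have hpoly : 1 + 2 * (s * (1 - q)⁻¹) ≤ (1 + q) / ((1 - q) * (1 - q ^ 3) * s) := by
    rw [le_div_iff₀ (mul_pos (mul_pos h1q h1q3) hs0)]
    have hne : (1:ℝ) - s ^ 2 ≠ 0 := by rw [hsq]; exact ne_of_gt h1q
    have expand : (1 + 2 * (s * (1 - q)⁻¹)) * ((1 - q) * (1 - q ^ 3) * s)
        = (1 - s ^ 2 + 2 * s) * (1 - s ^ 6) * s := by
      rw [← hsq]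
      field_simp
    rw [expand, ← hsq]
    exact stmt6_aux_poly s hs0 hs1
  have hprodstep : (1 + q) / ((1 - q) * (1 - q ^ 3) * s) ≤ P₂ / (P₁ ^ 2 * s) := by
    have hP1ne : P₁ ≠ 0 := ne_of_gt hP1pos
    have hsne : s ≠ 0 := ne_of_gt hs0
    calc (1 + q) / ((1 - q) * (1 - q ^ 3) * s) ≤ (1 + q) / (P₁ * s) := by
          apply div_le_div_of_nonneg_left (by linarith) (mul_pos hP1pos hs0)
          have := mul_le_mul_of_nonneg_right hP1le hs0.le
          linarith
      _ = (1 + q) * P₁ / (P₁ ^ 2 * s) := by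
          field_simp
      _ ≤ P₂ / (P₁ ^ 2 * s) := by
          gcongr
  have hns : Summable fun k : ℤ => ‖(q : ℂ) ^ (k ^ 2) * z ^ k‖ :=
    hsumf.congr fun k => (hnorm k).symm
  calc ‖∑' k : ℤ, (q : ℂ) ^ (k ^ 2) * z ^ k‖
      = ‖∑' k : ℤ, (q : ℂ) ^ (k ^ 2) * z ^ k‖ := rfl
    _ ≤ ∑' k : ℤ, ‖(q : ℂ) ^ (k ^ 2) * z ^ k‖ := norm_tsum_le_tsum_norm hns
    _ = ∑' k : ℤ, f k := tsum_congr fun k => by exact hnorm k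
    _ ≤ ∑' k : ℤ, E * g k := Summable.tsum_le_tsum hfg hsumf (hg.mul_left E)
    _ = E * ∑' k : ℤ, g k := tsum_mul_left
    _ ≤ E * (1 + 2 * (s * (1 - q)⁻¹)) := mul_le_mul_of_nonneg_left hgsum hE.le
    _ ≤ E * ((1 + q) / ((1 - q) * (1 - q ^ 3) * s)) := mul_le_mul_of_nonneg_left hpoly hE.le
    _ ≤ E * (P₂ / (P₁ ^ 2 * s)) := mul_le_mul_of_nonneg_left hprodstep hE.le
    _ = P₂ / (P₁ ^ 2 * s) * E := mul_comm _ _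
end

section
/- Let 0 < q < 1 and let z be a nonzero complex number. Then |A_q(z)| ≤ (−q^{1/2}; q)_∞ · exp( −(log|z|)² / (2 log q) ), where (−q^{1/2};q)_∞ = ∏_{k=0}^∞ (1 + q^{k+1/2}). (Note log q < 0, so the exponent is nonnegative.) -/
open scoped BigOperators
open Filter

namespace Stmt7Aux

noncomputable def P (q : ℝ) (k : ℕ) : ℝ := ∏ j ∈ Finset.range k, (1 - q ^ (j + 1))
noncomputable def a (q : ℝ) (k : ℕ) : ℝ := q ^ (k.choose 2) / P q k
noncomputable def S (q t : ℝ) : ℝ := ∑' k : ℕ, a q k * t ^ k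

variable {q : ℝ}


lemma P_pos (hq0 : 0 < q) (hq1 : q < 1) (k : ℕ) : 0 < P q k := by
  apply Finset.prod_pos
  intro j _
  have h1 : q ^ (j + 1) < 1 := pow_lt_one₀ hq0.le hq1 (Nat.succ_ne_zero j)
  linarith

lemma a_pos (hq0 : 0 < q) (hq1 : q < 1) (k : ℕ) : 0 < a q k :=
  div_pos (pow_pos hq0 _) (P_pos hq0 hq1 k)

lemma a_succ (hq0 : 0 < q) (hq1 : q < 1) (k : ℕ) :
    a q (k + 1) * (1 - q ^ (k + 1)) = a q k * q ^ k := by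
  have h2 : (k + 1).choose 2 = k.choose 2 + k := by
    rw [Nat.choose_succ_succ, Nat.choose_one_right, Nat.add_comm]
  have hP : P q (k + 1) = P q k * (1 - q ^ (k + 1)) := Finset.prod_range_succ _ _
  have hPk := (P_pos hq0 hq1 k).ne'
  have hq2 : (1 : ℝ) - q ^ (k + 1) ≠ 0 := by
    have : q ^ (k + 1) < 1 := pow_lt_one₀ hq0.le hq1 (Nat.succ_ne_zero k)
    linarith
  unfold a
  rw [hP, h2, pow_add]
  field_simp



lemma summable_a (hq0 : 0 < q) (hq1 : q < 1) {t : ℝ} (ht : 0 ≤ t) :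
    Summable (fun k => a q k * t ^ k) := by
  apply summable_of_ratio_norm_eventually_le (r := 1/2) (by norm_num)
  have h0 : Tendsto (fun k : ℕ => q ^ k * (t / (1 - q))) atTop (nhds 0) := by
    simpa using (tendsto_pow_atTop_nhds_zero_of_lt_one hq0.le hq1).mul_const (t / (1 - q))
  filter_upwards [h0.eventually_lt_const (by norm_num : (0:ℝ) < 1/2)] with k hk
  have hfk : 0 ≤ a q k * t ^ k := mul_nonneg (a_pos hq0 hq1 k).le (pow_nonneg ht k)
  have hfk1 : 0 ≤ a q (k+1) * t ^ (k+1) :=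
    mul_nonneg (a_pos hq0 hq1 (k+1)).le (pow_nonneg ht (k+1))
  rw [Real.norm_of_nonneg hfk1, Real.norm_of_nonneg hfk]
  have hden : 0 < 1 - q ^ (k+1) := by
    have : q ^ (k + 1) < 1 := pow_lt_one₀ hq0.le hq1 (Nat.succ_ne_zero k)
    linarith
  have hden' : 1 - q ≤ 1 - q ^ (k+1) := by
    have : q ^ (k+1) ≤ q := by
      simpa using pow_le_pow_of_le_one hq0.le hq1.le (Nat.one_le_iff_ne_zero.2 (Nat.succ_ne_zero k))
    linarith
  have hq' : 0 < 1 - q := by linarith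
  have hAk1 : a q (k+1) = a q k * q ^ k / (1 - q ^ (k+1)) := by
    field_simp
    linarith [a_succ hq0 hq1 k]
  have hr : q ^ k * t / (1 - q ^ (k+1)) ≤ 1/2 := by
    have h1 : q ^ k * t / (1 - q ^ (k+1)) ≤ q ^ k * t / (1 - q) :=
      div_le_div_of_nonneg_left (mul_nonneg (pow_nonneg hq0.le k) ht) hq' hden'
    have h2 : q ^ k * t / (1 - q) = q ^ k * (t / (1 - q)) := by ring
    linarith [hk, h1, h2 ▸ h1]
  calc a q (k+1) * t ^ (k+1)
      = (a q k * t ^ k) * (q ^ k * t / (1 - q ^ (k+1))) := by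
        rw [hAk1, pow_succ]; ring
    _ ≤ (a q k * t ^ k) * (1/2) := mul_le_mul_of_nonneg_left hr hfk
    _ = 1/2 * (a q k * t ^ k) := by ring



lemma summable_shift (hq0 : 0 < q) (hq1 : q < 1) {t : ℝ} (ht : 0 ≤ t) :
    Summable (fun k => a q (k+1) * t ^ (k+1)) :=
  (summable_nat_add_iff 1).mpr (summable_a hq0 hq1 ht)

lemma S_eq (hq0 : 0 < q) (hq1 : q < 1) {t : ℝ} (ht : 0 ≤ t) :
    S q t = 1 + ∑' k : ℕ, a q (k+1) * t ^ (k+1) := by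
  have h := Summable.tsum_eq_zero_add (summable_a hq0 hq1 ht)
  have ha0 : a q 0 = 1 := by simp [a, P]
  simpa [S, ha0] using h

lemma func_eq (hq0 : 0 < q) (hq1 : q < 1) {t : ℝ} (ht : 0 ≤ t) :
    S q t = (1 + t) * S q (q * t) := by
  have hqt : 0 ≤ q * t := mul_nonneg hq0.le ht
  have hsum_qt := summable_a hq0 hq1 hqt
  -- t * S q (q*t) = ∑' k, a k * q^k * t^(k+1)
  have h1 : t * S q (q * t) = ∑' k : ℕ, a q k * q ^ k * t ^ (k+1) := by
    rw [S, ← tsum_mul_left]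
    congr 1; funext k
    rw [mul_pow, pow_succ]; ring
  have hsum1 : Summable (fun k : ℕ => a q k * q ^ k * t ^ (k+1)) := by
    have := hsum_qt.mul_left t
    apply this.congr
    intro k; rw [mul_pow, pow_succ]; ring
  have hsum2 : Summable (fun k : ℕ => a q (k+1) * (q * t) ^ (k+1)) :=
    summable_shift hq0 hq1 hqt
  have h2 : S q (q * t) = 1 + ∑' k : ℕ, a q (k+1) * (q * t) ^ (k+1) := S_eq hq0 hq1 hqt
  have h3 : S q t = 1 + ∑' k : ℕ, a q (k+1) * t ^ (k+1) := S_eq hq0 hq1 ht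
  have key : (∑' k : ℕ, a q (k+1) * (q * t) ^ (k+1)) + (∑' k : ℕ, a q k * q ^ k * t ^ (k+1))
      = ∑' k : ℕ, a q (k+1) * t ^ (k+1) := by
    rw [← Summable.tsum_add hsum2 hsum1]
    congr 1; funext k
    have h := a_succ hq0 hq1 k
    have : a q (k+1) * (q*t)^(k+1) + a q k * q^k * t^(k+1)
        = (a q (k+1) * q^(k+1) + a q k * q^k) * t^(k+1) := by
      rw [mul_pow]; ring
    rw [this]
    have h4 : a q (k+1) * q ^ (k+1) + a q k * q ^ k = a q (k+1) := by nlinarith [h]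
    rw [h4]
  have : (1 + t) * S q (q * t) = S q (q*t) + t * S q (q*t) := by ring
  rw [this, h1, h2, h3]
  linarith [key]



lemma S_nonneg (hq0 : 0 < q) (hq1 : q < 1) {t : ℝ} (ht : 0 ≤ t) : 0 ≤ S q t :=
  tsum_nonneg fun k => mul_nonneg (a_pos hq0 hq1 k).le (pow_nonneg ht k)

lemma iter_eq (hq0 : 0 < q) (hq1 : q < 1) {t : ℝ} (ht : 0 ≤ t) (n : ℕ) :
    S q t = (∏ j ∈ Finset.range n, (1 + t * q ^ j)) * S q (t * q ^ n) := by
  induction n with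
  | zero => simp
  | succ n ih =>
    have h0 : 0 ≤ t * q ^ n := mul_nonneg ht (pow_nonneg hq0.le n)
    have h := func_eq hq0 hq1 h0
    have harg : q * (t * q ^ n) = t * q ^ (n+1) := by ring
    rw [harg] at h
    rw [ih, h, Finset.prod_range_succ]
    ring

lemma multipliable_one_add (hq0 : 0 < q) (hq1 : q < 1) {t : ℝ} (ht : 0 ≤ t) :
    Multipliable (fun k : ℕ => 1 + t * q ^ k) := by
  have hpos : ∀ (x : Unit) (k : ℕ), 0 < 1 + t * q ^ k := fun _ k => by
    nlinarith [mul_nonneg ht (pow_nonneg hq0.le k)]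
  have hsum : ∀ x : Unit, Summable fun k : ℕ => Real.log (1 + t * q ^ k) := by
    intro x
    refine Summable.of_nonneg_of_le (fun k => ?_) (fun k => ?_)
      ((summable_geometric_of_lt_one hq0.le hq1).mul_left t)
    · apply Real.log_nonneg
      nlinarith [mul_nonneg ht (pow_nonneg hq0.le k)]
    · have := Real.log_le_sub_one_of_pos (hpos () k)
      linarith
  exact Real.multipliable_of_summable_log (fun k => hpos () k) (hsum ())

lemma S_le_tprod (hq0 : 0 < q) (hq1 : q < 1) {t : ℝ} (ht : 0 ≤ t) :
    S q t ≤ ∏' k : ℕ, (1 + t * q ^ k) := by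
  have hm := multipliable_one_add hq0 hq1 ht
  have hprod : Tendsto (fun n => ∏ j ∈ Finset.range n, (1 + t * q ^ j)) atTop
      (nhds (∏' k : ℕ, (1 + t * q ^ k))) := hm.hasProd.tendsto_prod_nat
  -- S q (t * q^n) ≤ 1 + q^n * S q t
  have hbound : ∀ n : ℕ, S q (t * q ^ n) ≤ 1 + q ^ n * S q t := by
    intro n
    have h0 : 0 ≤ t * q ^ n := mul_nonneg ht (pow_nonneg hq0.le n)
    rw [S_eq hq0 hq1 h0]
    have hterm : ∀ k : ℕ, a q (k+1) * (t * q ^ n) ^ (k+1) ≤ q ^ n * (a q (k+1) * t ^ (k+1)) := by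
      intro k
      have : (t * q ^ n) ^ (k+1) = t ^ (k+1) * (q ^ n) ^ (k+1) := mul_pow _ _ _
      rw [this]
      have h1 : (q ^ n) ^ (k+1) ≤ q ^ n := by
        calc (q ^ n) ^ (k+1)
            ≤ (q ^ n) ^ 1 := pow_le_pow_of_le_one (pow_nonneg hq0.le n)
              (pow_le_one₀ hq0.le hq1.le) (Nat.one_le_iff_ne_zero.2 (Nat.succ_ne_zero k))
          _ = q ^ n := pow_one _
      have h2 : 0 ≤ a q (k+1) * t ^ (k+1) :=
        mul_nonneg (a_pos hq0 hq1 _).le (pow_nonneg ht _)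
      nlinarith [h2, h1, mul_nonneg (a_pos hq0 hq1 (k+1)).le (pow_nonneg ht (k+1))]
    have hs1 : Summable (fun k => a q (k+1) * (t * q ^ n) ^ (k+1)) :=
      summable_shift hq0 hq1 h0
    have hs2 : Summable (fun k => q ^ n * (a q (k+1) * t ^ (k+1))) :=
      (summable_shift hq0 hq1 ht).mul_left _
    have h3 : (∑' k : ℕ, a q (k+1) * (t * q ^ n) ^ (k+1)) ≤
        ∑' k : ℕ, q ^ n * (a q (k+1) * t ^ (k+1)) := Summable.tsum_le_tsum hterm hs1 hs2
    have h4 : (∑' k : ℕ, q ^ n * (a q (k+1) * t ^ (k+1))) =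
        q ^ n * ∑' k : ℕ, a q (k+1) * t ^ (k+1) := tsum_mul_left
    have h5 : (∑' k : ℕ, a q (k+1) * t ^ (k+1)) ≤ S q t := by
      have h6 := S_eq hq0 hq1 ht
      linarith
    have h7 : (0:ℝ) ≤ q ^ n := pow_nonneg hq0.le n
    nlinarith [h3, h4 ▸ h3, mul_le_mul_of_nonneg_left h5 h7]
  have hle : ∀ n : ℕ, S q t ≤ (∏ j ∈ Finset.range n, (1 + t * q ^ j)) * (1 + q ^ n * S q t) := by
    intro n
    have hPn : 0 ≤ ∏ j ∈ Finset.range n, (1 + t * q ^ j) := by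
      apply Finset.prod_nonneg
      intro j _
      nlinarith [mul_nonneg ht (pow_nonneg hq0.le j)]
    calc S q t = (∏ j ∈ Finset.range n, (1 + t * q ^ j)) * S q (t * q ^ n) :=
          iter_eq hq0 hq1 ht n
      _ ≤ (∏ j ∈ Finset.range n, (1 + t * q ^ j)) * (1 + q ^ n * S q t) :=
          mul_le_mul_of_nonneg_left (hbound n) hPn
  have htend : Tendsto (fun n => (∏ j ∈ Finset.range n, (1 + t * q ^ j)) * (1 + q ^ n * S q t))
      atTop (nhds ((∏' k : ℕ, (1 + t * q ^ k)) * 1)) := by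
    apply hprod.mul
    have : Tendsto (fun n : ℕ => q ^ n * S q t) atTop (nhds 0) := by
      simpa using (tendsto_pow_atTop_nhds_zero_of_lt_one hq0.le hq1).mul_const (S q t)
    simpa using this.const_add 1
  rw [mul_one] at htend
  exact ge_of_tendsto' htend hle



lemma choose_two (k : ℕ) : 2 * k.choose 2 + k = k ^ 2 := by
  induction k with
  | zero => rfl
  | succ k ih =>
    have h : (k + 1).choose 2 = k.choose 2 + k := by
      rw [Nat.choose_succ_succ, Nat.choose_one_right, Nat.add_comm]
    rw [h]
    have : (k + 1) ^ 2 = k ^ 2 + 2 * k + 1 := by ring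
    omega

lemma point_bound (hq0 : 0 < q) (hq1 : q < 1) {r : ℝ} (hr : 0 < r) (k : ℕ) :
    q ^ (k ^ 2) * r ^ k ≤
      q ^ (k.choose 2) * Real.sqrt q ^ k * Real.exp (-(Real.log r) ^ 2 / (2 * Real.log q)) := by
  set L := Real.log q with hLdef
  set R := Real.log r with hRdef
  have hL : L < 0 := Real.log_neg hq0 hq1
  have hq : q = Real.exp L := (Real.exp_log hq0).symm
  have hrr : r = Real.exp R := (Real.exp_log hr).symm
  have hsq : Real.sqrt q = Real.exp (L / 2) := by
    rw [← Real.exp_log (Real.sqrt_pos.2 hq0), Real.log_sqrt hq0.le]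
  have e1 : q ^ (k ^ 2) * r ^ k = Real.exp ((k ^ 2 : ℕ) * L + (k : ℝ) * R) := by
    rw [Real.exp_add, Real.exp_nat_mul, Real.exp_nat_mul, ← hq, ← hrr]
  have e2 : q ^ (k.choose 2) * Real.sqrt q ^ k *
      Real.exp (-R ^ 2 / (2 * L)) =
      Real.exp ((k.choose 2 : ℕ) * L + (k : ℝ) * (L / 2) + -R ^ 2 / (2 * L)) := by
    rw [Real.exp_add, Real.exp_add, Real.exp_nat_mul, Real.exp_nat_mul, ← hq, ← hsq]
  rw [e1, e2]
  apply Real.exp_le_exp.2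
  have hc : 2 * (k.choose 2 : ℝ) + (k : ℝ) = (k : ℝ) ^ 2 := by
    exact_mod_cast congrArg (fun n : ℕ => (n : ℝ)) (choose_two k)
  have h2L : 2 * L < 0 := by linarith
  have hD : R ^ 2 / (2 * L) * (2 * L) = R ^ 2 := div_mul_cancel₀ _ h2L.ne
  have key : (k : ℝ) ^ 2 * L / 2 + (k : ℝ) * R + R ^ 2 / (2 * L) ≤ 0 := by
    nlinarith [sq_nonneg ((k : ℝ) * L + R), hD, h2L]
  have hcL : (2 * ((k.choose 2 : ℕ) : ℝ) + (k : ℝ)) * L = (k : ℝ) ^ 2 * L := by rw [hc]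
  have hneg : -R ^ 2 / (2 * L) = -(R ^ 2 / (2 * L)) := by ring
  push_cast
  rw [hneg]
  linarith [key, hcL]

end Stmt7Aux

open Stmt7Aux

/-- For `0 < q < 1` and nonzero `z : ℂ`,
`|A_q(z)| = |∑_{k=0}^∞ q^{k²} (-z)^k/(q;q)_k| ≤ (-q^{1/2};q)_∞ · exp(-(log|z|)²/(2 log q))`,
where `(-q^{1/2};q)_∞ = ∏_{k=0}^∞ (1 + √q · q^k)`. -/
theorem stmt7 (q : ℝ) (hq0 : 0 < q) (hq1 : q < 1) (z : ℂ) (hz : z ≠ 0) :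
    ‖(∑' k : ℕ, (q : ℂ) ^ (k ^ 2) * (-z) ^ k /
        ∏ j ∈ Finset.range k, (1 - (q : ℂ) ^ (j + 1)))‖ ≤
      (∏' k : ℕ, (1 + Real.sqrt q * q ^ k)) *
        Real.exp (-(Real.log ‖z‖) ^ 2 / (2 * Real.log q)) := by
  have hr : 0 < ‖z‖ := norm_pos_iff.mpr hz
  set r := ‖z‖ with hrdef
  set M := Real.exp (-(Real.log r) ^ 2 / (2 * Real.log q)) with hMdef
  have hM : 0 < M := Real.exp_pos _
  set f : ℕ → ℂ := fun k => (q : ℂ) ^ (k ^ 2) * (-z) ^ k /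
      ∏ j ∈ Finset.range k, (1 - (q : ℂ) ^ (j + 1)) with hfdef
  have habs : ∀ k : ℕ, ‖f k‖ = q ^ (k ^ 2) * r ^ k / P q k := by
    intro k
    have hprod : (∏ j ∈ Finset.range k, (1 - (q : ℂ) ^ (j + 1))) = ((P q k : ℝ) : ℂ) := by
      rw [P]
      push_cast
      rfl
    rw [hfdef]
    simp only [norm_div, norm_mul, norm_pow, hprod, Complex.norm_real, norm_neg,
      Real.norm_eq_abs]
    rw [abs_of_pos (P_pos hq0 hq1 k), abs_of_pos hq0]
  have hbound : ∀ k : ℕ, q ^ (k ^ 2) * r ^ k / P q k ≤ a q k * Real.sqrt q ^ k * M := by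
    intro k
    have h1 := point_bound hq0 hq1 hr k
    have hPk := P_pos hq0 hq1 k
    have h2 : q ^ (k ^ 2) * r ^ k / P q k ≤
        q ^ (k.choose 2) * Real.sqrt q ^ k * M / P q k := by
      gcongr
    have h3 : q ^ (k.choose 2) * Real.sqrt q ^ k * M / P q k
        = a q k * Real.sqrt q ^ k * M := by
      rw [a]; field_simp
    linarith [h2, h3 ▸ h2]
  have hnn : ∀ k : ℕ, 0 ≤ q ^ (k ^ 2) * r ^ k / P q k := fun k =>
    div_nonneg (mul_nonneg (pow_nonneg hq0.le _) (pow_nonneg hr.le _)) (P_pos hq0 hq1 k).le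
  have hsum2 : Summable (fun k : ℕ => a q k * Real.sqrt q ^ k * M) :=
    (summable_a hq0 hq1 (Real.sqrt_nonneg q)).mul_right M
  have hsum1 : Summable (fun k : ℕ => q ^ (k ^ 2) * r ^ k / P q k) :=
    Summable.of_nonneg_of_le hnn hbound hsum2
  have hsumnorm : Summable (fun k : ℕ => ‖f k‖) := by
    apply hsum1.congr
    intro k
    rw [← habs k]
  calc ‖∑' k : ℕ, f k‖ = ‖∑' k : ℕ, f k‖ := rfl
    _ ≤ ∑' k : ℕ, ‖f k‖ := norm_tsum_le_tsum_norm hsumnorm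
    _ = ∑' k : ℕ, q ^ (k ^ 2) * r ^ k / P q k := by
        apply tsum_congr; intro k; rw [habs k]
    _ ≤ ∑' k : ℕ, a q k * Real.sqrt q ^ k * M := Summable.tsum_le_tsum hbound hsum1 hsum2
    _ = (∑' k : ℕ, a q k * Real.sqrt q ^ k) * M := tsum_mul_right
    _ ≤ (∏' k : ℕ, (1 + Real.sqrt q * q ^ k)) * M :=
        mul_le_mul_of_nonneg_right (S_le_tprod hq0 hq1 (Real.sqrt_nonneg q)) hM.le
end

section
/- For every fixed complex number z, the limit of A_q((1−q)z) = ∑_{k=0}^∞ q^{k²} (−(1−q)z)^k / (q;q)_k as q tends to 1 from the left (q ∈ (0,1), q → 1⁻) equals e^{−z}. -/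
open scoped BigOperators
open Filter Finset

private lemma stmt8_rw (z : ℂ) {q : ℝ} (hq : q ∈ Set.Ioo (0:ℝ) 1) (k : ℕ) :
    (q : ℂ) ^ (k ^ 2) * (-(((1 : ℂ) - (q : ℂ)) * z)) ^ k /
          ∏ j ∈ Finset.range k, (1 - (q : ℂ) ^ (j + 1))
    = (q : ℂ) ^ (k ^ 2) * (-z) ^ k /
          ∏ j ∈ Finset.range k, (∑ i ∈ Finset.range (j + 1), (q : ℂ) ^ i) := by
  have hq1 : (1 : ℂ) - (q : ℂ) ≠ 0 := by
    intro h
    have : (q : ℂ) = 1 := by linear_combination -h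
    exact hq.2.ne (by exact_mod_cast this)
  have hfac : ∀ j : ℕ, (1 : ℂ) - (q : ℂ) ^ (j + 1)
      = (1 - (q : ℂ)) * ∑ i ∈ Finset.range (j + 1), (q : ℂ) ^ i := by
    intro j
    have := geom_sum_mul (q : ℂ) (j + 1)
    linear_combination this
  calc (q : ℂ) ^ (k ^ 2) * (-(((1 : ℂ) - (q : ℂ)) * z)) ^ k /
          ∏ j ∈ Finset.range k, (1 - (q : ℂ) ^ (j + 1))
      = ((1 - (q:ℂ))^k * ((q : ℂ) ^ (k ^ 2) * (-z) ^ k)) /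
        ((1 - (q:ℂ))^k * ∏ j ∈ Finset.range k, (∑ i ∈ Finset.range (j + 1), (q : ℂ) ^ i)) := by
        rw [Finset.prod_congr rfl fun j _ => hfac j, Finset.prod_mul_distrib,
          Finset.prod_const, Finset.card_range,
          show -(((1:ℂ) - (q:ℂ)) * z) = (1 - (q:ℂ)) * (-z) by ring, mul_pow]
        ring
    _ = _ := mul_div_mul_left _ _ (pow_ne_zero _ hq1)

/-- For every fixed `z : ℂ`, the limit of
`A_q((1-q)z) = ∑_{k=0}^∞ q^{k²} (-(1-q)z)^k / (q;q)_k` as `q → 1⁻` with `q ∈ (0,1)`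
equals `e^{-z}`. -/
theorem stmt8 (z : ℂ) :
    Filter.Tendsto
      (fun q : ℝ => ∑' k : ℕ, (q : ℂ) ^ (k ^ 2) * (-(((1 : ℂ) - (q : ℂ)) * z)) ^ k /
          ∏ j ∈ Finset.range k, (1 - (q : ℂ) ^ (j + 1)))
      (nhdsWithin 1 (Set.Ioo 0 1)) (nhds (Complex.exp (-z))) := by
  have hexp : Complex.exp (-z) = ∑' k : ℕ, (-z) ^ k / (Nat.factorial k : ℂ) := by
    rw [Complex.exp_eq_exp_ℂ, NormedSpace.exp_eq_tsum_div]
  rw [hexp]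
  refine tendsto_tsum_of_dominated_convergence (f := fun (q : ℝ) (k : ℕ) =>
      (q : ℂ) ^ (k ^ 2) * (-(((1 : ℂ) - (q : ℂ)) * z)) ^ k /
          ∏ j ∈ Finset.range k, (1 - (q : ℂ) ^ (j + 1)))
      (bound := fun k => ‖z‖ ^ k / Nat.factorial k)
      (Real.summable_pow_div_factorial ‖z‖) (fun k => ?_) ?_
  · -- pointwise convergence
    have c1 : Continuous fun q : ℝ => ((q:ℂ) ^ (k^2) * (-z)^k) := by fun_prop
    have c2 : Continuous fun q : ℝ =>
        ∏ j ∈ Finset.range k, (∑ i ∈ Finset.range (j+1), (q:ℂ)^i) := by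
      apply continuous_finset_prod; intro j _
      apply continuous_finset_sum; intro i _; fun_prop
    have hval : (∏ j ∈ Finset.range k, (∑ i ∈ Finset.range (j+1), (((1:ℝ)):ℂ)^i))
        = (Nat.factorial k : ℂ) := by
      simp only [Complex.ofReal_one, one_pow, Finset.sum_const, Finset.card_range,
        nsmul_eq_mul, mul_one]
      rw [← Nat.cast_prod, Finset.prod_range_add_one_eq_factorial]
    have hne : (∏ j ∈ Finset.range k, (∑ i ∈ Finset.range (j+1), (((1:ℝ)):ℂ)^i)) ≠ 0 := by
      rw [hval]; exact_mod_cast Nat.cast_ne_zero.mpr k.factorial_ne_zero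
    have h1 := (c1.tendsto 1).div (c2.tendsto 1) hne
    rw [hval, show (((1:ℝ):ℂ) ^ (k^2) * (-z)^k) = (-z)^k by
      simp [Complex.ofReal_one]] at h1
    have hcont := h1.mono_left (nhdsWithin_le_nhds
      (s := Set.Ioo (0:ℝ) 1))
    refine hcont.congr' ?_
    filter_upwards [self_mem_nhdsWithin] with q hq
    exact (stmt8_rw z hq k).symm
  · -- bound
    filter_upwards [self_mem_nhdsWithin] with q hq k
    obtain ⟨hq0, hq1⟩ := hq
    rw [stmt8_rw z ⟨hq0, hq1⟩ k]
    have hSr : ∀ j : ℕ, (∑ i ∈ Finset.range (j + 1), (q : ℂ) ^ i)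
        = ((∑ i ∈ Finset.range (j + 1), q ^ i : ℝ) : ℂ) := by intro j; push_cast; ring
    set Dr : ℝ := ∏ j ∈ Finset.range k, (∑ i ∈ Finset.range (j + 1), q ^ i) with hDr
    have hD : (∏ j ∈ Finset.range k, (∑ i ∈ Finset.range (j + 1), (q : ℂ) ^ i))
        = ((Dr : ℝ) : ℂ) := by
      rw [Finset.prod_congr rfl fun j _ => hSr j, ← Complex.ofReal_prod]
    have hSpos : ∀ j ∈ Finset.range k, (0:ℝ) < ∑ i ∈ Finset.range (j + 1), q ^ i := by
      intro j _
      exact Finset.sum_pos (fun i _ => pow_pos hq0 i) (by simp)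
    have hDrpos : 0 < Dr := Finset.prod_pos hSpos
    -- lower bound on Dr
    have hSlow : ∀ j ∈ Finset.range k, ((j:ℝ) + 1) * q ^ j ≤ ∑ i ∈ Finset.range (j + 1), q ^ i := by
      intro j _
      calc ((j:ℝ) + 1) * q ^ j = ∑ _i ∈ Finset.range (j + 1), q ^ j := by
            rw [Finset.sum_const, Finset.card_range]; ring
        _ ≤ ∑ i ∈ Finset.range (j + 1), q ^ i :=
            Finset.sum_le_sum fun i hi =>
              pow_le_pow_of_le_one hq0.le hq1.le (Nat.lt_succ_iff.mp (Finset.mem_range.mp hi))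
    have hDlow : (Nat.factorial k : ℝ) * q ^ (∑ j ∈ Finset.range k, j) ≤ Dr := by
      calc (Nat.factorial k : ℝ) * q ^ (∑ j ∈ Finset.range k, j)
          = ∏ j ∈ Finset.range k, (((j:ℝ) + 1) * q ^ j) := by
            rw [Finset.prod_mul_distrib, Finset.prod_pow_eq_pow_sum]
            congr 1
            rw [← Finset.prod_range_add_one_eq_factorial k, Nat.cast_prod]
            push_cast; rfl
        _ ≤ Dr := Finset.prod_le_prod
            (fun j _ => by positivity) hSlow
    have hqpow : q ^ (k ^ 2) ≤ q ^ (∑ j ∈ Finset.range k, j) :=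
      pow_le_pow_of_le_one hq0.le hq1.le (by
        calc ∑ j ∈ Finset.range k, j ≤ ∑ _j ∈ Finset.range k, k :=
              Finset.sum_le_sum fun j hj => (Finset.mem_range.mp hj).le
          _ = k * k := by rw [Finset.sum_const, Finset.card_range, smul_eq_mul]
          _ = k ^ 2 := (sq k).symm)
    -- compute norm
    rw [hD]
    have hnorm : ‖(q : ℂ) ^ (k ^ 2) * (-z) ^ k / ((Dr : ℝ) : ℂ)‖
        = q ^ (k ^ 2) * ‖z‖ ^ k / Dr := by
      rw [norm_div, norm_mul, norm_pow, norm_pow, norm_neg, Complex.norm_real,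
        Complex.norm_real, Real.norm_of_nonneg hq0.le, Real.norm_of_nonneg hDrpos.le]
    rw [hnorm, div_le_div_iff₀ hDrpos (by positivity)]
    calc q ^ (k ^ 2) * ‖z‖ ^ k * (Nat.factorial k:ℝ)
        ≤ q ^ (∑ j ∈ Finset.range k, j) * ‖z‖ ^ k * (Nat.factorial k:ℝ) := by
          apply mul_le_mul_of_nonneg_right (mul_le_mul_of_nonneg_right hqpow (by positivity))
          positivity
      _ = ((Nat.factorial k:ℝ) * q ^ (∑ j ∈ Finset.range k, j)) * ‖z‖ ^ k := by ring
      _ ≤ Dr * ‖z‖ ^ k := mul_le_mul_of_nonneg_right hDlow (by positivity)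
      _ = ‖z‖ ^ k * Dr := mul_comm _ _
end

section
/- Let 0 < q < 1, let ν > −1, let τ > 0 and θ be real numbers, and let z be a nonzero complex number. Then for every positive integer n, writing ∑_{k=0}^∞ q^{k²} (−q^{2nτ} z² e^{2πinθ})^k / ( (q;q)_k (q^{ν+1};q)_k ) = 1 + r_n, one has |r_n| ≤ |z|² q^{2nτ+1} exp( |z|² q^{2nτ+1} / (1−q) ) / ( (1−q) (q^{ν+1};q)_∞ ). -/
open scoped BigOperators

/-- The finite q-Pochhammer symbol `(w;q)_k = ∏_{j=0}^{k-1} (1 - w q^j)` as a complex number. -/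
noncomputable def qPochCW (w : ℂ) (q : ℝ) (k : ℕ) : ℂ :=
  ∏ j ∈ Finset.range k, (1 - w * (q : ℂ) ^ j)


open Finset in
theorem prod_lower (q : ℝ) (hq0 : 0 < q) (hq1 : q < 1) (k : ℕ) :
    (1 - q) ^ k * (k.factorial : ℝ) * q ^ (k * (k - 1) / 2) ≤
      ∏ j ∈ range k, (1 - q * q ^ j) := by
  have hfac : ∀ j : ℕ, (1 - q) * ((j + 1 : ℕ) : ℝ) * q ^ j ≤ 1 - q * q ^ j := by
    intro j
    have hg : (1 - q) * ∑ i ∈ range (j + 1), q ^ i = 1 - q * q ^ j := by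
      have := geom_sum_mul q (j + 1)
      have h2 : (∑ i ∈ range (j+1), q ^ i) * (q - 1) = q ^ (j+1) - 1 := this
      nlinarith [h2, pow_succ q j]
    have hsum : ((j + 1 : ℕ) : ℝ) * q ^ j ≤ ∑ i ∈ range (j + 1), q ^ i := by
      have := Finset.card_nsmul_le_sum (range (j + 1)) (fun i => q ^ i) (q ^ j)
        (fun i hi => pow_le_pow_of_le_one hq0.le hq1.le (Nat.lt_succ_iff.mp (mem_range.mp hi)))
      simpa [nsmul_eq_mul] using this
    calc (1 - q) * ((j + 1 : ℕ) : ℝ) * q ^ j = (1 - q) * (((j + 1 : ℕ) : ℝ) * q ^ j) := by ring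
      _ ≤ (1 - q) * ∑ i ∈ range (j + 1), q ^ i :=
        mul_le_mul_of_nonneg_left hsum (by linarith)
      _ = 1 - q * q ^ j := hg
  calc (1 - q) ^ k * (k.factorial : ℝ) * q ^ (k * (k - 1) / 2)
      = ∏ j ∈ range k, ((1 - q) * ((j + 1 : ℕ) : ℝ) * q ^ j) := by
        rw [Finset.prod_mul_distrib, Finset.prod_mul_distrib, Finset.prod_const,
          Finset.prod_pow_eq_pow_sum, Finset.sum_range_id, ← Nat.cast_prod,
          prod_range_add_one_eq_factorial, Finset.card_range]
    _ ≤ ∏ j ∈ range k, (1 - q * q ^ j) := by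
        refine Finset.prod_le_prod (fun j _ => ?_) (fun j _ => hfac j)
        have h1 : (0:ℝ) ≤ ((j+1:ℕ):ℝ) := by positivity
        have h2 : (0:ℝ) ≤ 1 - q := by linarith
        positivity

theorem tprod_facts (q A : ℝ) (hq0 : 0 < q) (hq1 : q < 1) (hA0 : 0 < A) (hA1 : A < 1) :
    0 < (∏' k : ℕ, (1 - A * q ^ k)) ∧
      ∀ k : ℕ, (∏' k : ℕ, (1 - A * q ^ k)) ≤ ∏ j ∈ Finset.range k, (1 - A * q ^ j) := by
  set f : ℕ → ℝ := fun k => 1 - A * q ^ k with hf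
  have hfk0 : ∀ k, 0 < f k := by
    intro k
    have h1 : A * q ^ k ≤ A * 1 := by
      have := pow_le_one₀ hq0.le hq1.le (n := k)
      nlinarith
    simp only [hf]; nlinarith
  have hfk1 : ∀ k, f k ≤ 1 := by
    intro k
    have : 0 < A * q ^ k := by positivity
    simp only [hf]; linarith
  have hlognp : ∀ k, Real.log (f k) ≤ 0 := fun k => Real.log_nonpos (hfk0 k).le (hfk1 k)
  have hlogbound : ∀ k, |Real.log (f k)| ≤ (A / (1 - A)) * q ^ k := by
    intro k
    rw [abs_of_nonpos (hlognp k), ← Real.log_inv]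
    have hfpos := hfk0 k
    have h1 : Real.log (f k)⁻¹ ≤ (f k)⁻¹ - 1 :=
      Real.log_le_sub_one_of_pos (inv_pos.mpr hfpos)
    have h2 : (f k)⁻¹ - 1 = (A * q ^ k) / f k := by
      rw [inv_eq_one_div, div_sub' hfpos.ne', hf]
      ring_nf
    have h3 : (A * q ^ k) / f k ≤ (A * q ^ k) / (1 - A) := by
      apply div_le_div_of_nonneg_left (by positivity) (by linarith) ?_
      have hk1 : q ^ k ≤ 1 := pow_le_one₀ hq0.le hq1.le
      simp only [hf]; nlinarith
    calc Real.log (f k)⁻¹ ≤ (A * q ^ k) / f k := by rw [← h2]; exact h1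
      _ ≤ (A * q ^ k) / (1 - A) := h3
      _ = (A / (1 - A)) * q ^ k := by ring
  have hsumlog : Summable fun k => Real.log (f k) := by
    apply Summable.of_abs
    exact Summable.of_nonneg_of_le (fun k => abs_nonneg _) hlogbound
      ((summable_geometric_of_lt_one hq0.le hq1).mul_left _)
  have htp : Real.exp (∑' k, Real.log (f k)) = ∏' k, f k := by
    exact Real.rexp_tsum_eq_tprod hfk0 hsumlog
  constructor
  · rw [← htp]; exact Real.exp_pos _
  · intro k
    rw [← htp]
    have hprodexp : ∏ j ∈ Finset.range k, f j =
        Real.exp (∑ j ∈ Finset.range k, Real.log (f j)) := by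
      rw [Real.exp_sum]
      exact Finset.prod_congr rfl (fun j _ => (Real.exp_log (hfk0 j)).symm)
    rw [hprodexp, Real.exp_le_exp]
    have hsplit := (Summable.sum_add_tsum_nat_add k hsumlog)
    have htail : (∑' i, Real.log (f (i + k))) ≤ 0 :=
      tsum_nonpos (fun i => hlognp (i + k))
    linarith [hsplit]

theorem exp_sub_one_le_aux (x : ℝ) (hx : 0 ≤ x) : Real.exp x - 1 ≤ x * Real.exp x := by
  have h1 : -x + 1 ≤ Real.exp (-x) := Real.add_one_le_exp (-x)
  have h2 : Real.exp (-x) * Real.exp x = 1 := by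
    rw [← Real.exp_add]; simp
  nlinarith [Real.exp_pos x]

set_option maxHeartbeats 1000000 in
/-- case 1 of the theorem for Jackson's q-Bessel function `J_ν^{(2)}`:
for `0 < q < 1`, `ν > -1`, `τ > 0`, `θ ∈ ℝ`, `z ≠ 0`, and every positive integer `n`,
writing `∑_{k=0}^∞ q^{k²} (-q^{2nτ} z² e^{2πinθ})^k / ((q;q)_k (q^{ν+1};q)_k) = 1 + r_n`,
one has `|r_n| ≤ |z|² q^{2nτ+1} exp(|z|² q^{2nτ+1}/(1-q)) / ((1-q)(q^{ν+1};q)_∞)`. -/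
theorem stmt16 (q : ℝ) (hq0 : 0 < q) (hq1 : q < 1) (ν : ℝ) (hν : -1 < ν)
    (τ θ : ℝ) (hτ : 0 < τ) (z : ℂ) (hz : z ≠ 0) (n : ℕ) (hn : 0 < n) :
    ‖(∑' k : ℕ, (q : ℂ) ^ (k ^ 2) *
          (-(((q ^ (2 * (n : ℝ) * τ) : ℝ) : ℂ) * z ^ 2 *
            Complex.exp (((2 * Real.pi * n * θ : ℝ) : ℂ) * Complex.I))) ^ k /
          (qPochCW (q : ℂ) q k * qPochCW ((q ^ (ν + 1) : ℝ) : ℂ) q k)) - 1‖ ≤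
      ‖z‖ ^ 2 * q ^ (2 * (n : ℝ) * τ + 1) *
        Real.exp (‖z‖ ^ 2 * q ^ (2 * (n : ℝ) * τ + 1) / (1 - q)) /
        ((1 - q) * ∏' k : ℕ, (1 - q ^ (ν + 1) * q ^ k)) := by
  have hq1' : (0:ℝ) < 1 - q := by linarith
  set A : ℝ := q ^ (ν + 1) with hA
  have hA0 : 0 < A := Real.rpow_pos_of_pos hq0 _
  have hA1 : A < 1 := Real.rpow_lt_one hq0.le hq1 (by linarith)
  set Q2 : ℝ := q ^ (2 * (n:ℝ) * τ) with hQ2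
  have hQ2pos : 0 < Q2 := Real.rpow_pos_of_pos hq0 _
  have hQq : q ^ (2 * (n:ℝ) * τ + 1) = Q2 * q := by
    rw [Real.rpow_add hq0, Real.rpow_one]
  set x : ℝ := ‖z‖ ^ 2 * q ^ (2 * (n:ℝ) * τ + 1) / (1 - q) with hx
  have hx0 : 0 ≤ x := by rw [hx, hQq]; positivity
  set P : ℝ := ∏' k : ℕ, (1 - A * q ^ k) with hP
  obtain ⟨hP0, hPle⟩ := tprod_facts q A hq0 hq1 hA0 hA1
  set w : ℂ := -(((Q2 : ℝ) : ℂ) * z ^ 2 *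
      Complex.exp (((2 * Real.pi * n * θ : ℝ) : ℂ) * Complex.I)) with hw
  set a : ℕ → ℂ := fun k => (q : ℂ) ^ (k ^ 2) * w ^ k /
      (qPochCW (q : ℂ) q k * qPochCW ((A : ℝ) : ℂ) q k) with ha
  have habsw : ‖w‖ = Q2 * ‖z‖ ^ 2 := by
    rw [hw, norm_neg, norm_mul, norm_mul, Complex.norm_exp_ofReal_mul_I,
      Complex.norm_real, norm_pow, Real.norm_of_nonneg hQ2pos.le, mul_one]
  have habsDq : ∀ k, ‖qPochCW (q:ℂ) q k‖ =
      ∏ j ∈ Finset.range k, (1 - q * q ^ j) := by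
    intro k
    rw [qPochCW, norm_prod]
    refine Finset.prod_congr rfl (fun j _ => ?_)
    have h1 : (1 : ℂ) - (q:ℂ) * (q:ℂ) ^ j = (((1 - q * q ^ j : ℝ)) : ℂ) := by push_cast; ring
    have h2 : (0:ℝ) < 1 - q * q ^ j := by
      have : q * q ^ j ≤ q * 1 := by
        have := pow_le_one₀ hq0.le hq1.le (n := j); nlinarith
      nlinarith
    rw [h1, Complex.norm_real, Real.norm_of_nonneg h2.le]
  have habsDA : ∀ k, ‖qPochCW ((A:ℝ):ℂ) q k‖ =
      ∏ j ∈ Finset.range k, (1 - A * q ^ j) := by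
    intro k
    rw [qPochCW, norm_prod]
    refine Finset.prod_congr rfl (fun j _ => ?_)
    have h1 : (1 : ℂ) - (A:ℂ) * (q:ℂ) ^ j = (((1 - A * q ^ j : ℝ)) : ℂ) := by push_cast; ring
    have h2 : (0:ℝ) < 1 - A * q ^ j := by
      have : A * q ^ j ≤ A * 1 := by
        have := pow_le_one₀ hq0.le hq1.le (n := j); nlinarith
      nlinarith
    rw [h1, Complex.norm_real, Real.norm_of_nonneg h2.le]
  -- key bound
  have hDqpos : ∀ k, (0:ℝ) < (1 - q) ^ k * (k.factorial : ℝ) * q ^ (k * (k - 1) / 2) := by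
    intro k
    have : (0:ℝ) < (k.factorial : ℝ) := by exact_mod_cast k.factorial_pos
    positivity
  have hDq : ∀ k, (0:ℝ) < ∏ j ∈ Finset.range k, (1 - q * q ^ j) := by
    intro k
    exact lt_of_lt_of_le (hDqpos k) (prod_lower q hq0 hq1 k)
  have hDA : ∀ k, (0:ℝ) < ∏ j ∈ Finset.range k, (1 - A * q ^ j) :=
    fun k => lt_of_lt_of_le hP0 (hPle k)
  have hbound : ∀ k, ‖a k‖ ≤ x ^ k / (k.factorial : ℝ) / P := by
    intro k
    have hsq : q ^ (k ^ 2) = q ^ k * q ^ (k * (k - 1) / 2) * q ^ (k * (k - 1) / 2) := by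
      rw [← pow_add, ← pow_add]
      congr 1
      have h2 : k * (k - 1) / 2 * 2 = k * (k - 1) := Nat.div_mul_cancel (Nat.even_mul_pred_self k).two_dvd
      have h3 : k ^ 2 = k * k := sq k
      have h4 : k * (k - 1) + k = k * k := by
        cases k with
        | zero => simp
        | succ m => simp [Nat.succ_sub_one]; ring
      omega
    have hfac : (0:ℝ) < (k.factorial : ℝ) := by exact_mod_cast k.factorial_pos
    have hqm1 : q ^ (k * (k - 1) / 2) ≤ 1 := pow_le_one₀ hq0.le hq1.le
    calc ‖a k‖
        = q ^ (k ^ 2) * (Q2 * ‖z‖ ^ 2) ^ k /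
            ((∏ j ∈ Finset.range k, (1 - q * q ^ j)) *
              (∏ j ∈ Finset.range k, (1 - A * q ^ j))) := by
          rw [ha, norm_div, norm_mul, norm_mul, norm_pow, norm_pow, habsw, habsDq, habsDA,
            Complex.norm_real, Real.norm_of_nonneg hq0.le]
      _ ≤ q ^ (k ^ 2) * (Q2 * ‖z‖ ^ 2) ^ k /
            (((1 - q) ^ k * (k.factorial : ℝ) * q ^ (k * (k - 1) / 2)) * P) := by
          exact div_le_div_of_nonneg_left (by positivity) (mul_pos (hDqpos k) hP0)
            (mul_le_mul (prod_lower q hq0 hq1 k) (hPle k) hP0.le (hDq k).le)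
      _ ≤ q ^ k * (Q2 * ‖z‖ ^ 2) ^ k / (((1 - q) ^ k * (k.factorial : ℝ)) * P) := by
          rw [hsq]
          rw [show q ^ k * q ^ (k * (k - 1) / 2) * q ^ (k * (k - 1) / 2) *
              (Q2 * ‖z‖ ^ 2) ^ k /
              ((1 - q) ^ k * ↑k.factorial * q ^ (k * (k - 1) / 2) * P) =
              (q ^ k * q ^ (k * (k - 1) / 2) * (Q2 * ‖z‖ ^ 2) ^ k) /
              (((1 - q) ^ k * ↑k.factorial) * P) from by
            rw [div_eq_div_iff (by positivity) (by positivity)]; ring]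
          rw [div_le_div_iff_of_pos_right (by positivity)]
          have hprod : 0 ≤ q ^ k * (Q2 * ‖z‖ ^ 2) ^ k :=
            mul_nonneg (pow_pos hq0 k).le
              (pow_nonneg (mul_nonneg hQ2pos.le (pow_nonneg (norm_nonneg z) 2)) k)
          nlinarith [hprod, hqm1]
      _ = x ^ k / (k.factorial : ℝ) / P := by
          rw [hx, hQq, div_pow, mul_pow, mul_pow]
          rw [div_div, div_div, div_eq_div_iff (by positivity) (by positivity)]
          ring
  have hsummand : Summable (fun k : ℕ => x ^ k / (k.factorial : ℝ) / P) :=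
    (NormedSpace.expSeries_div_summable x).div_const P
  have hsuma : Summable a :=
    Summable.of_norm (Summable.of_nonneg_of_le (fun k => norm_nonneg _)
      (fun k => by exact hbound k) hsummand)
  have ha0 : a 0 = 1 := by simp [ha, qPochCW]
  have hsplit : (∑' k, a k) - 1 = ∑' k, a (k + 1) := by
    rw [Summable.tsum_eq_zero_add hsuma, ha0]; ring
  have hnorm1 : Summable fun k => ‖a (k + 1)‖ :=
    (summable_nat_add_iff 1).mpr hsuma.norm
  have hb2 : Summable (fun k : ℕ => x ^ (k + 1) / ((k + 1).factorial : ℝ) / P) :=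
    (summable_nat_add_iff 1).mpr hsummand
  have hexp : Real.exp x = ∑' k : ℕ, x ^ k / (k.factorial : ℝ) := by
    rw [Real.exp_eq_exp_ℝ, NormedSpace.exp_eq_tsum_div]
  have key : ‖(∑' k, a k) - 1‖ ≤ x * Real.exp x / P := by
    calc ‖(∑' k, a k) - 1‖ = ‖∑' k, a (k + 1)‖ := by
          rw [hsplit]
      _ ≤ ∑' k, ‖a (k + 1)‖ := norm_tsum_le_tsum_norm hnorm1
      _ ≤ ∑' k : ℕ, x ^ (k + 1) / ((k + 1).factorial : ℝ) / P :=
          Summable.tsum_le_tsum (fun k => by exact hbound (k + 1))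
            hnorm1 hb2
      _ = (Real.exp x - 1) / P := by
          rw [tsum_div_const]
          congr 1
          have h0 := Summable.tsum_eq_zero_add (NormedSpace.expSeries_div_summable x)
          rw [hexp, h0]
          norm_num
      _ ≤ x * Real.exp x / P :=
          (div_le_div_iff_of_pos_right hP0).mpr (exp_sub_one_le_aux x hx0)
  refine le_trans key (le_of_eq ?_)
  rw [hx, hQq]
  field_simp
end

section
/- Let 0 < q < 1, let θ be a real number, let z be a nonzero complex number, and let λ be a fixed real number. Then there exists N such that for every integer n ≥ N for which nθ − λ is an integer, one has | ∑_{k=0}^{n} (q;q)_n q^{k²} e^{2πinkθ} (−z^{−2})^k / ( (q;q)_k (q;q)_{n−k} ) − A_q( e^{2πiλ} z^{−2} ) | ≤ 6 ( A_q(−|z|^{−2}) / (q;q)_∞ ) · ( q^{n/2} + q^{⌊n/2⌋²} / |z|^{2⌊n/2⌋} ). The sum on the left equals h_n(sinh ξ_n | q) / (z^n q^{−n²s}), where s = 1/2 + iθπ/log q and sinh ξ_n = (q^{−ns} z − q^{ns} z^{−1})/2. -/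
open scoped BigOperators

/-- The finite q-Pochhammer symbol `(q;q)_k = ∏_{j=1}^k (1 - q^j)` as a complex number. -/
noncomputable def qPochC (q : ℝ) (k : ℕ) : ℂ :=
  ∏ j ∈ Finset.range k, (1 - (q : ℂ) ^ (j + 1))

/-- The infinite q-Pochhammer symbol `(q;q)_∞ = ∏_{k=1}^∞ (1 - q^k)`. -/
noncomputable def qPochInf (q : ℝ) : ℝ :=
  ∏' k : ℕ, (1 - q ^ (k + 1))

/-- The Ramanujan function `A_q(z) = ∑_{k=0}^∞ q^{k²} (-z)^k / (q;q)_k`. -/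
noncomputable def ramanujanAq (q : ℝ) (z : ℂ) : ℂ :=
  ∑' k : ℕ, (q : ℂ) ^ (k ^ 2) * (-z) ^ k / qPochC q k

/-- The Ramanujan function at a real argument,
`A_q(x) = ∑_{k=0}^∞ q^{k²} (-x)^k / (q;q)_k`. -/
noncomputable def ramanujanAqR (q x : ℝ) : ℝ :=
  ∑' k : ℕ, q ^ (k ^ 2) * (-x) ^ k / ∏ j ∈ Finset.range k, (1 - q ^ (j + 1))

noncomputable def Pq (q : ℝ) (k : ℕ) : ℝ := ∏ j ∈ Finset.range k, (1 - q ^ (j + 1))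

section aux
variable {q : ℝ}

lemma fac_pos (hq0 : 0 < q) (hq1 : q < 1) (j : ℕ) : 0 < 1 - q ^ (j + 1) := by
  have := pow_lt_one₀ hq0.le hq1 (by omega : j + 1 ≠ 0); linarith

lemma fac_le_one (hq0 : 0 < q) (j : ℕ) : 1 - q ^ (j + 1) ≤ 1 := by
  have := pow_pos hq0 (j + 1); linarith

lemma Pq_pos (hq0 : 0 < q) (hq1 : q < 1) (k : ℕ) : 0 < Pq q k :=
  Finset.prod_pos fun j _ => fac_pos hq0 hq1 j

lemma Pq_le_one (hq0 : 0 < q) (hq1 : q < 1) (k : ℕ) : Pq q k ≤ 1 :=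
  Finset.prod_le_one (fun j _ => (fac_pos hq0 hq1 j).le) (fun j _ => fac_le_one hq0 j)

lemma qPochC_eq (q : ℝ) (k : ℕ) : qPochC q k = ((Pq q k : ℝ) : ℂ) := by
  rw [Pq, qPochC]; push_cast; rfl

lemma qPochC_ne_zero (hq0 : 0 < q) (hq1 : q < 1) (k : ℕ) : qPochC q k ≠ 0 := by
  rw [qPochC_eq]
  exact_mod_cast (Pq_pos hq0 hq1 k).ne'

lemma summable_log_fac (hq0 : 0 < q) (hq1 : q < 1) :
    Summable fun k : ℕ => Real.log (1 - q ^ (k + 1)) := by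
  apply Summable.of_norm
  have hs : Summable fun k : ℕ => q ^ (k + 1) / (1 - q) := by
    apply Summable.div_const
    exact (summable_geometric_of_lt_one hq0.le hq1).comp_injective (add_left_injective 1)
  apply hs.of_nonneg_of_le (fun k => norm_nonneg _)
  intro k
  have h1 : 0 < 1 - q ^ (k + 1) := fac_pos hq0 hq1 k
  have h2 : Real.log (1 - q ^ (k + 1)) ≤ 0 :=
    Real.log_nonpos h1.le (fac_le_one hq0 k)
  rw [Real.norm_eq_abs, abs_of_nonpos h2]
  have h3 : -Real.log (1 - q ^ (k + 1)) = Real.log (1 - q ^ (k + 1))⁻¹ := by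
    rw [Real.log_inv]
  rw [h3]
  have h4 : Real.log (1 - q ^ (k + 1))⁻¹ ≤ (1 - q ^ (k + 1))⁻¹ - 1 :=
    Real.log_le_sub_one_of_pos (by positivity)
  have h5 : (1 - q ^ (k + 1))⁻¹ - 1 = q ^ (k + 1) / (1 - q ^ (k + 1)) := by
    field_simp
    ring
  have h6 : q ^ (k + 1) / (1 - q ^ (k + 1)) ≤ q ^ (k + 1) / (1 - q) := by
    apply div_le_div_of_nonneg_left (by positivity) (by linarith) ?_
    have : q ^ (k + 1) ≤ q := by
      calc q ^ (k+1) ≤ q ^ 1 := pow_le_pow_of_le_one hq0.le hq1.le (by omega)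
      _ = q := pow_one q
    linarith
  linarith

lemma qPochInf_eq_exp (hq0 : 0 < q) (hq1 : q < 1) :
    qPochInf q = Real.exp (∑' k : ℕ, Real.log (1 - q ^ (k + 1))) := by
  have := Real.rexp_tsum_eq_tprod (f := fun k : ℕ => 1 - q ^ (k + 1))
    (fun k => fac_pos hq0 hq1 k) (summable_log_fac hq0 hq1)
  exact this.symm

lemma Pq_eq_exp (hq0 : 0 < q) (hq1 : q < 1) (k : ℕ) :
    Pq q k = Real.exp (∑ j ∈ Finset.range k, Real.log (1 - q ^ (j + 1))) := by
  rw [Real.exp_sum]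
  exact Finset.prod_congr rfl fun j _ => (Real.exp_log (fac_pos hq0 hq1 j)).symm

lemma qPochInf_pos (hq0 : 0 < q) (hq1 : q < 1) : 0 < qPochInf q := by
  rw [qPochInf_eq_exp hq0 hq1]; exact Real.exp_pos _

lemma qPochInf_le_Pq (hq0 : 0 < q) (hq1 : q < 1) (k : ℕ) : qPochInf q ≤ Pq q k := by
  rw [qPochInf_eq_exp hq0 hq1, Pq_eq_exp hq0 hq1, Real.exp_le_exp]
  have hsum := summable_log_fac hq0 hq1
  rw [← Summable.sum_add_tsum_nat_add k hsum]
  have : ∑' j : ℕ, Real.log (1 - q ^ (j + k + 1)) ≤ 0 :=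
    tsum_nonpos fun j => Real.log_nonpos (fac_pos hq0 hq1 (j + k)).le (fac_le_one hq0 (j + k))
  simpa [add_right_comm] using this

lemma qPochInf_le_one_sub (hq0 : 0 < q) (hq1 : q < 1) : qPochInf q ≤ 1 - q := by
  have := qPochInf_le_Pq hq0 hq1 1
  simpa [Pq] using this

lemma one_sub_sum_le_prod (f : ℕ → ℝ) (h0 : ∀ j, 0 ≤ f j) (h1 : ∀ j, f j ≤ 1)
    (s : Finset ℕ) : 1 - ∑ j ∈ s, f j ≤ ∏ j ∈ s, (1 - f j) := by
  classical
  induction s using Finset.induction_on with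
  | empty => simp
  | @insert a s ha ih =>
    rw [Finset.sum_insert ha, Finset.prod_insert ha]
    have hprod0 : 0 ≤ ∏ j ∈ s, (1 - f j) :=
      Finset.prod_nonneg fun j _ => by linarith [h1 j]
    have hsum0 : 0 ≤ ∑ j ∈ s, f j := Finset.sum_nonneg fun j _ => h0 j
    nlinarith [h0 a, h1 a, ih]

lemma summable_tq {x : ℝ} (hq0 : 0 < q) (hq1 : q < 1) (hx : 0 ≤ x) :
    Summable fun k : ℕ => q ^ (k ^ 2) * x ^ k / Pq q k := by
  apply summable_of_ratio_norm_eventually_le (r := q) hq1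
  have h1 : ∀ᶠ k : ℕ in Filter.atTop, x * (q ^ 2) ^ k ≤ 1 / 2 := by
    have : Filter.Tendsto (fun k : ℕ => x * (q ^ 2) ^ k) Filter.atTop (nhds 0) := by
      simpa using (tendsto_pow_atTop_nhds_zero_of_lt_one (by positivity)
        (by nlinarith)).const_mul x
    exact this.eventually_le_const (by norm_num)
  have h2 : ∀ᶠ k : ℕ in Filter.atTop, q ^ (k + 1) ≤ 1 / 2 := by
    have : Filter.Tendsto (fun k : ℕ => q ^ (k + 1)) Filter.atTop (nhds 0) := by
      exact (tendsto_pow_atTop_nhds_zero_of_lt_one hq0.le hq1).comp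
        (Filter.tendsto_add_atTop_nat 1)
    exact this.eventually_le_const (by norm_num)
  filter_upwards [h1, h2] with k hk1 hk2
  have hPk := Pq_pos hq0 hq1 k
  have hPk1 := Pq_pos hq0 hq1 (k + 1)
  have hPsucc : Pq q (k + 1) = Pq q k * (1 - q ^ (k + 1)) := by
    rw [Pq, Finset.prod_range_succ]; rfl
  rw [Real.norm_eq_abs, Real.norm_eq_abs, abs_of_nonneg (by positivity),
    abs_of_nonneg (by positivity)]
  have hrw : q * (q ^ (k ^ 2) * x ^ k / Pq q k) * (Pq q k * (1 - q ^ (k + 1)))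
      = q * (q ^ (k ^ 2) * x ^ k) * (1 - q ^ (k + 1)) := by
    field_simp
  rw [hPsucc, div_le_iff₀ (mul_pos hPk (fac_pos hq0 hq1 k)), hrw]
  have e1 : (k+1)^2 = k^2 + (2*k+1) := by ring
  rw [e1, pow_add, pow_succ]
  have hq2k : q ^ (2*k+1) * x ≤ 1/2 * q := by
    have : q ^ (2*k+1) = (q^2)^k * q := by rw [← pow_mul]; ring_nf
    rw [this]
    calc (q^2)^k * q * x = (x * (q^2)^k) * q := by ring
    _ ≤ (1/2) * q := mul_le_mul_of_nonneg_right hk1 hq0.le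
  have hhalf : (1:ℝ)/2 ≤ 1 - q ^ (k+1) := by linarith
  have hq1k : 0 ≤ q ^ (k^2) * x^k := by positivity
  calc q ^ (k^2) * q ^ (2*k+1) * (x ^ k * x) = (q ^ (k^2) * x^k) * (q ^ (2*k+1) * x) := by ring
  _ ≤ (q ^ (k^2) * x^k) * (1/2 * q) := mul_le_mul_of_nonneg_left hq2k hq1k
  _ ≤ (q ^ (k^2) * x^k) * ((1 - q^(k+1)) * q) := by
      apply mul_le_mul_of_nonneg_left _ hq1k
      exact mul_le_mul_of_nonneg_right hhalf hq0.le
  _ = q * (q ^ (k ^ 2) * x ^ k) * (1 - q ^ (k + 1)) := by ring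

end aux

set_option maxHeartbeats 2000000 in
/-- case 2 of the theorem for the Ismail–Masson polynomials, `τ = 0`:
there exists `N` such that for every `n ≥ N` with `nθ - λ ∈ ℤ`,
`|∑_{k=0}^n (q;q)_n q^{k²} e^{2πinkθ} (-z^{-2})^k / ((q;q)_k (q;q)_{n-k})
   - A_q(e^{2πiλ} z^{-2})|
  ≤ 6 (A_q(-|z|^{-2})/(q;q)_∞) (q^{n/2} + q^{⌊n/2⌋²}/|z|^{2⌊n/2⌋})`. -/
theorem stmt17 (q : ℝ) (hq0 : 0 < q) (hq1 : q < 1) (θ : ℝ) (z : ℂ) (hz : z ≠ 0)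
    (lam : ℝ) :
    ∃ N : ℕ, ∀ n : ℕ, N ≤ n → (∃ m : ℤ, (n : ℝ) * θ = (m : ℝ) + lam) →
      ‖((∑ k ∈ Finset.range (n + 1), qPochC q n * (q : ℂ) ^ (k ^ 2) *
            Complex.exp (((2 * Real.pi * n * k * θ : ℝ) : ℂ) * Complex.I) *
            (-(z ^ 2)⁻¹) ^ k / (qPochC q k * qPochC q (n - k))) -
          ramanujanAq q (Complex.exp (((2 * Real.pi * lam : ℝ) : ℂ) * Complex.I) *
            (z ^ 2)⁻¹))‖ ≤
        6 * (ramanujanAqR q (-((‖z‖ ^ 2)⁻¹)) / qPochInf q) *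
          (q ^ ((n : ℝ) / 2) + q ^ ((n / 2) ^ 2) / ‖z‖ ^ (2 * (n / 2))) := by
  refine ⟨0, fun n _ hlam => ?_⟩
  obtain ⟨M, hM⟩ := hlam
  have hzabs : 0 < ‖z‖ := norm_pos_iff.mpr hz
  set x : ℝ := (‖z‖ ^ 2)⁻¹ with hxdef
  have hx : 0 < x := by positivity
  set m : ℕ := n / 2 with hmdef
  have hmn : m ≤ n := Nat.div_le_self n 2
  set E : ℂ := Complex.exp (((2 * Real.pi * lam : ℝ) : ℂ) * Complex.I) with hEdef
  set w : ℂ := E * (z ^ 2)⁻¹ with hwdef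
  have habsw : ‖w‖ = x := by
    rw [hwdef, norm_mul, hEdef, Complex.norm_exp_ofReal_mul_I, one_mul, norm_inv, norm_pow]
  set t : ℕ → ℝ := fun k => q ^ (k ^ 2) * x ^ k / Pq q k with htdef
  set a : ℕ → ℂ := fun k => (q : ℂ) ^ (k ^ 2) * (-w) ^ k / qPochC q k with hadef
  have ht0 : ∀ k, 0 ≤ t k := fun k => by
    have := Pq_pos hq0 hq1 k; positivity
  have habs_a : ∀ k, ‖a k‖ = t k := by
    intro k
    rw [hadef, htdef]
    simp only [norm_div, norm_mul, norm_pow, norm_neg, habsw, qPochC_eq,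
      Complex.norm_real, Real.norm_eq_abs, abs_of_pos (Pq_pos hq0 hq1 k)]
    rw [abs_of_pos hq0]
  have ht : Summable t := summable_tq hq0 hq1 hx.le
  have ha : Summable a := by
    apply Summable.of_norm
    apply ht.congr
    intro k
    rw [habs_a k]
  set Q : ℕ → ℝ := fun k => ∏ j ∈ Finset.Ico (n - k) n, (1 - q ^ (j + 1)) with hQdef
  have hQ0 : ∀ k, 0 ≤ Q k := fun k =>
    Finset.prod_nonneg fun j _ => (fac_pos hq0 hq1 j).le
  have hQ1 : ∀ k, Q k ≤ 1 := fun k =>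
    Finset.prod_le_one (fun j _ => (fac_pos hq0 hq1 j).le) (fun j _ => fac_le_one hq0 j)
  have hMc : (n : ℂ) * (θ : ℂ) = (M : ℂ) + (lam : ℂ) := by
    exact_mod_cast congrArg Complex.ofReal hM
  have hsummand : ∀ k ∈ Finset.range (n + 1),
      qPochC q n * (q : ℂ) ^ (k ^ 2) *
        Complex.exp (((2 * Real.pi * n * k * θ : ℝ) : ℂ) * Complex.I) *
        (-(z ^ 2)⁻¹) ^ k / (qPochC q k * qPochC q (n - k))
      = a k * ((Q k : ℝ) : ℂ) := by
    intro k hk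
    have hexp : Complex.exp (((2 * Real.pi * n * k * θ : ℝ) : ℂ) * Complex.I) = E ^ k := by
      have heq : (((2 * Real.pi * n * k * θ : ℝ) : ℂ) * Complex.I)
          = ((k * M : ℤ) : ℂ) * (2 * (Real.pi : ℂ) * Complex.I)
            + (k : ℕ) * (((2 * Real.pi * lam : ℝ) : ℂ) * Complex.I) := by
        push_cast
        linear_combination (2 * (Real.pi : ℂ) * (k : ℂ) * Complex.I) * hMc
      rw [heq, Complex.exp_add, Complex.exp_int_mul_two_pi_mul_I, one_mul, hEdef,
        ← Complex.exp_nat_mul]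
    have hprod : qPochC q n = qPochC q (n - k) * ((Q k : ℝ) : ℂ) := by
      have hQc : ((Q k : ℝ) : ℂ) = ∏ j ∈ Finset.Ico (n - k) n, (1 - (q : ℂ) ^ (j + 1)) := by
        rw [hQdef]; push_cast; rfl
      rw [hQc, qPochC, qPochC, Finset.prod_range_mul_prod_Ico _ (Nat.sub_le n k)]
    have hneg : (-w) ^ k = E ^ k * (-(z ^ 2)⁻¹) ^ k := by
      rw [← mul_pow]
      congr 1
      rw [hwdef]; ring
    have h1 : qPochC q k ≠ 0 := qPochC_ne_zero hq0 hq1 k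
    have h2 : qPochC q (n - k) ≠ 0 := qPochC_ne_zero hq0 hq1 (n - k)
    rw [hexp, hprod, hadef]
    simp only []
    rw [hneg]
    field_simp
  -- rewrite the finite sum and the Ramanujan function
  rw [Finset.sum_congr rfl hsummand]
  have hAqw : ramanujanAq q w = (∑ k ∈ Finset.range (n + 1), a k) + ∑' k, a (k + (n + 1)) := by
    have h1 : ramanujanAq q w = ∑' k, a k := by
      rw [ramanujanAq]
    rw [h1, ← Summable.sum_add_tsum_nat_add (n + 1) ha]
  rw [hAqw]
  have hdiff : (∑ k ∈ Finset.range (n + 1), a k * ((Q k : ℝ) : ℂ)) -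
        ((∑ k ∈ Finset.range (n + 1), a k) + ∑' k, a (k + (n + 1)))
      = (∑ k ∈ Finset.range (n + 1), a k * (((Q k : ℝ) : ℂ) - 1)) - ∑' k, a (k + (n + 1)) := by
    rw [sub_add_eq_sub_sub]
    congr 1
    rw [← Finset.sum_sub_distrib]
    exact Finset.sum_congr rfl fun k _ => by ring
  rw [hdiff]
  -- triangle inequality
  have hterm_eq : ∀ k, ‖a k * (((Q k : ℝ) : ℂ) - 1)‖ = t k * (1 - Q k) := by
    intro k
    rw [norm_mul]
    have h1 : ‖a k‖ = t k := by rw [habs_a k]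
    have h2 : ‖((Q k : ℝ) : ℂ) - 1‖ = 1 - Q k := by
      have : ((Q k : ℝ) : ℂ) - 1 = ((Q k - 1 : ℝ) : ℂ) := by push_cast; ring
      rw [this, Complex.norm_real, Real.norm_eq_abs, abs_of_nonpos (by linarith [hQ1 k]),
        neg_sub]
    rw [h1, h2]
  have htshift : ∀ j : ℕ, Summable fun k => t (k + j) := fun j =>
    (summable_nat_add_iff j).mpr ht
  have htri : ‖((∑ k ∈ Finset.range (n + 1), a k * (((Q k : ℝ) : ℂ) - 1)) -
        ∑' k, a (k + (n + 1)))‖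
      ≤ (∑ k ∈ Finset.range (n + 1), t k * (1 - Q k)) + ∑' k, t (k + (n + 1)) := by
    refine le_trans (norm_sub_le _ _) (add_le_add ?_ ?_)
    · refine le_trans (norm_sum_le _ _) ?_
      exact le_of_eq (Finset.sum_congr rfl fun k _ => hterm_eq k)
    · refine le_trans (norm_tsum_le_tsum_norm ?_) ?_
      · apply (htshift (n + 1)).congr
        intro k
        rw [habs_a]
      · exact le_of_eq (tsum_congr fun k => by rw [habs_a])
  refine le_trans htri ?_
  -- now a purely real estimate
  set A : ℝ := ∑' k, t k with hAdef
  have hA0 : 0 ≤ A := tsum_nonneg ht0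
  have hPinf : 0 < qPochInf q := qPochInf_pos hq0 hq1
  have hAR : ramanujanAqR q (-x) = A := by
    rw [ramanujanAqR, hAdef]
    exact tsum_congr fun k => by rw [htdef]; simp [Pq]
  set g : ℕ → ℝ := fun k => q ^ (k ^ 2) * x ^ k with hgdef
  have hg0 : ∀ k, 0 ≤ g k := fun k => by positivity
  have hgt : ∀ k, g k ≤ t k := by
    intro k
    have hP := Pq_pos hq0 hq1 k
    have hP1 := Pq_le_one hq0 hq1 k
    have h0 : 0 ≤ q ^ (k ^ 2) * x ^ k := by positivity
    show q ^ (k ^ 2) * x ^ k ≤ q ^ (k ^ 2) * x ^ k / Pq q k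
    rw [le_div_iff₀ hP]
    nlinarith
  have hg_sum : Summable g := ht.of_nonneg_of_le hg0 hgt
  have hgA : ∑' k, g k ≤ A := Summable.tsum_le_tsum hgt hg_sum ht
  have hgshiftA : ∑' k, g (k + 1) ≤ A := by
    have h1 := Summable.sum_add_tsum_nat_add 1 hg_sum
    have h2 : 0 ≤ ∑ i ∈ Finset.range 1, g i := Finset.sum_nonneg fun i _ => hg0 i
    linarith [hgA]
  -- core tail bound
  have hcore : ∑' k, t (k + (m + 1)) ≤ q ^ (m ^ 2) * x ^ m * (A / qPochInf q) := by
    have hterm : ∀ k : ℕ, t (k + (m + 1)) ≤ q ^ (m ^ 2) * x ^ m / qPochInf q * g (k + 1) := by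
      intro k
      rw [htdef, hgdef]
      have hP := Pq_pos hq0 hq1 (k + (m + 1))
      have hPle := qPochInf_le_Pq hq0 hq1 (k + (m + 1))
      have hnum : q ^ ((k + (m + 1)) ^ 2) * x ^ (k + (m + 1))
          ≤ (q ^ (m ^ 2) * x ^ m) * (q ^ ((k + 1) ^ 2) * x ^ (k + 1)) := by
        have he : (k + (m + 1)) ^ 2 = m ^ 2 + (k + 1) ^ 2 + 2 * m * (k + 1) := by ring
        have he2 : k + (m + 1) = m + (k + 1) := by ring
        rw [he, he2, pow_add, pow_add, pow_add]
        have hle1 : q ^ (2 * m * (k + 1)) ≤ 1 :=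
          pow_le_one₀ hq0.le hq1.le
        have h0 : (0:ℝ) ≤ q ^ (m ^ 2) * q ^ ((k + 1) ^ 2) * (x ^ m * x ^ (k + 1)) := by
          positivity
        calc q ^ m ^ 2 * q ^ (k + 1) ^ 2 * q ^ (2 * m * (k + 1)) * (x ^ m * x ^ (k + 1))
            ≤ q ^ m ^ 2 * q ^ (k + 1) ^ 2 * 1 * (x ^ m * x ^ (k + 1)) := by
              apply mul_le_mul_of_nonneg_right _ (by positivity)
              apply mul_le_mul_of_nonneg_left hle1 (by positivity)
        _ = q ^ m ^ 2 * x ^ m * (q ^ (k + 1) ^ 2 * x ^ (k + 1)) := by ring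
      calc q ^ ((k + (m + 1)) ^ 2) * x ^ (k + (m + 1)) / Pq q (k + (m + 1))
          ≤ q ^ ((k + (m + 1)) ^ 2) * x ^ (k + (m + 1)) / qPochInf q :=
            div_le_div_of_nonneg_left (by positivity) hPinf hPle
      _ ≤ (q ^ (m ^ 2) * x ^ m) * (q ^ ((k + 1) ^ 2) * x ^ (k + 1)) / qPochInf q := by
            gcongr
      _ = q ^ (m ^ 2) * x ^ m / qPochInf q * (q ^ ((k + 1) ^ 2) * x ^ (k + 1)) := by ring
    have hsum2 : Summable fun k => q ^ (m ^ 2) * x ^ m / qPochInf q * g (k + 1) :=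
      (((summable_nat_add_iff 1).mpr hg_sum)).mul_left _
    calc ∑' k, t (k + (m + 1))
        ≤ ∑' k, q ^ (m ^ 2) * x ^ m / qPochInf q * g (k + 1) :=
          Summable.tsum_le_tsum hterm (htshift (m + 1)) hsum2
    _ = q ^ (m ^ 2) * x ^ m / qPochInf q * ∑' k, g (k + 1) := tsum_mul_left
    _ ≤ q ^ (m ^ 2) * x ^ m / qPochInf q * A := by
        apply mul_le_mul_of_nonneg_left hgshiftA (by positivity)
    _ = q ^ (m ^ 2) * x ^ m * (A / qPochInf q) := by ring
  -- the far tail is smaller than the tail at m+1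
  have htail2 : ∑' k, t (k + (n + 1)) ≤ ∑' k, t (k + (m + 1)) := by
    have hsplit := Summable.sum_add_tsum_nat_add (f := fun k => t (k + (m + 1))) (n - m)
      (htshift (m + 1))
    have hco : (∑' k, t (k + (n - m) + (m + 1))) = ∑' k, t (k + (n + 1)) :=
      tsum_congr fun k => by congr 1; omega
    have h0 : 0 ≤ ∑ i ∈ Finset.range (n - m), t (i + (m + 1)) :=
      Finset.sum_nonneg fun i _ => ht0 _
    beta_reduce at hsplit
    rw [hco] at hsplit
    linarith
  -- split the finite sum
  have hsplit_sum : ∑ k ∈ Finset.range (n + 1), t k * (1 - Q k)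
      = (∑ k ∈ Finset.range (m + 1), t k * (1 - Q k))
        + ∑ k ∈ Finset.Ico (m + 1) (n + 1), t k * (1 - Q k) :=
    (Finset.sum_range_add_sum_Ico _ (by omega)).symm
  -- middle piece
  have hmid : ∑ k ∈ Finset.Ico (m + 1) (n + 1), t k * (1 - Q k) ≤ ∑' k, t (k + (m + 1)) := by
    have h1 : ∀ k ∈ Finset.Ico (m + 1) (n + 1), t k * (1 - Q k) ≤ t k := fun k _ => by
      nlinarith [ht0 k, hQ0 k, hQ1 k]
    calc ∑ k ∈ Finset.Ico (m + 1) (n + 1), t k * (1 - Q k)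
        ≤ ∑ k ∈ Finset.Ico (m + 1) (n + 1), t k := Finset.sum_le_sum h1
    _ = ∑ i ∈ Finset.range (n - m), t (m + 1 + i) := by
        rw [Finset.sum_Ico_eq_sum_range]
        have he : n + 1 - (m + 1) = n - m := by omega
        rw [he]
    _ = ∑ i ∈ Finset.range (n - m), t (i + (m + 1)) :=
        Finset.sum_congr rfl fun i _ => by rw [Nat.add_comm]
    _ ≤ ∑' k, t (k + (m + 1)) :=
        Summable.sum_le_tsum _ (fun i _ => ht0 _) (htshift (m + 1))
  -- front piece
  have h1q : 0 < 1 - q := by linarith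
  have hQb : ∀ k ∈ Finset.range (m + 1), 1 - Q k ≤ q ^ ((n : ℝ) / 2) * (1 - q)⁻¹ := by
    intro k hk
    have hkm : k ≤ m := Nat.lt_succ_iff.mp (Finset.mem_range.mp hk)
    have h1 : 1 - Q k ≤ ∑ j ∈ Finset.Ico (n - k) n, q ^ (j + 1) := by
      have hw := one_sub_sum_le_prod (fun j => q ^ (j + 1))
        (fun j => by positivity) (fun j => pow_le_one₀ hq0.le hq1.le) (Finset.Ico (n - k) n)
      have : Q k = ∏ j ∈ Finset.Ico (n - k) n, (1 - q ^ (j + 1)) := by rw [hQdef]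
      rw [this]
      linarith
    have h2 : ∑ j ∈ Finset.Ico (n - k) n, q ^ (j + 1) ≤ q ^ (n - k + 1) * (1 - q)⁻¹ := by
      rw [Finset.sum_Ico_eq_sum_range]
      have hterm : ∀ i : ℕ, q ^ (n - k + i + 1) = q ^ (n - k + 1) * q ^ i := fun i => by
        rw [← pow_add]
        congr 1
        omega
      calc ∑ i ∈ Finset.range (n - (n - k)), q ^ (n - k + i + 1)
          = q ^ (n - k + 1) * ∑ i ∈ Finset.range (n - (n - k)), q ^ i := by
            rw [Finset.mul_sum]
            exact Finset.sum_congr rfl fun i _ => hterm i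
      _ ≤ q ^ (n - k + 1) * (1 - q)⁻¹ := by
            apply mul_le_mul_of_nonneg_left _ (by positivity)
            calc ∑ i ∈ Finset.range (n - (n - k)), q ^ i
                ≤ ∑' i : ℕ, q ^ i :=
                  Summable.sum_le_tsum _ (fun i _ => by positivity)
                    (summable_geometric_of_lt_one hq0.le hq1)
            _ = (1 - q)⁻¹ := tsum_geometric_of_lt_one hq0.le hq1
    have h3 : q ^ (n - k + 1) ≤ q ^ ((n : ℝ) / 2) := by
      rw [← Real.rpow_natCast q (n - k + 1)]
      apply Real.rpow_le_rpow_of_exponent_ge hq0 hq1.le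
      have hk2 : (k : ℝ) ≤ (n : ℝ) / 2 := by
        calc (k : ℝ) ≤ ((m : ℕ) : ℝ) := by exact_mod_cast hkm
        _ ≤ (n : ℝ) / 2 := by rw [hmdef]; exact_mod_cast Nat.cast_div_le
      have hcast : ((n - k + 1 : ℕ) : ℝ) = (n : ℝ) - (k : ℝ) + 1 := by
        have : k ≤ n := le_trans hkm hmn
        push_cast [this]
        ring
      rw [hcast]
      linarith
    calc 1 - Q k ≤ q ^ (n - k + 1) * (1 - q)⁻¹ := le_trans h1 h2
    _ ≤ q ^ ((n : ℝ) / 2) * (1 - q)⁻¹ :=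
        mul_le_mul_of_nonneg_right h3 (by positivity)
  have hfront : ∑ k ∈ Finset.range (m + 1), t k * (1 - Q k)
      ≤ q ^ ((n : ℝ) / 2) * (A / qPochInf q) := by
    have hstep : ∀ k ∈ Finset.range (m + 1),
        t k * (1 - Q k) ≤ t k * (q ^ ((n : ℝ) / 2) * (1 - q)⁻¹) := fun k hk =>
      mul_le_mul_of_nonneg_left (hQb k hk) (ht0 k)
    calc ∑ k ∈ Finset.range (m + 1), t k * (1 - Q k)
        ≤ ∑ k ∈ Finset.range (m + 1), t k * (q ^ ((n : ℝ) / 2) * (1 - q)⁻¹) :=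
          Finset.sum_le_sum hstep
    _ = (∑ k ∈ Finset.range (m + 1), t k) * (q ^ ((n : ℝ) / 2) * (1 - q)⁻¹) := by
        rw [← Finset.sum_mul]
    _ ≤ A * (q ^ ((n : ℝ) / 2) * (1 - q)⁻¹) := by
        apply mul_le_mul_of_nonneg_right _ (by positivity)
        exact Summable.sum_le_tsum _ (fun k _ => ht0 k) ht
    _ = q ^ ((n : ℝ) / 2) * (A / (1 - q)) := by ring
    _ ≤ q ^ ((n : ℝ) / 2) * (A / qPochInf q) := by
        apply mul_le_mul_of_nonneg_left _ (Real.rpow_nonneg hq0.le _)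
        exact div_le_div_of_nonneg_left hA0 hPinf (qPochInf_le_one_sub hq0 hq1)
  -- finish
  have hxm : q ^ (m ^ 2) / ‖z‖ ^ (2 * m) = q ^ (m ^ 2) * x ^ m := by
    rw [hxdef, div_eq_mul_inv, pow_mul, ← inv_pow]
  rw [hAR, hxm]
  have hC0 : 0 ≤ A / qPochInf q := by positivity
  have hqh0 : 0 ≤ q ^ ((n : ℝ) / 2) := Real.rpow_nonneg hq0.le _
  have hqm0 : 0 ≤ q ^ (m ^ 2) * x ^ m := by positivity
  have hb1 : ∑ k ∈ Finset.range (n + 1), t k * (1 - Q k)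
      ≤ q ^ ((n : ℝ) / 2) * (A / qPochInf q) + q ^ (m ^ 2) * x ^ m * (A / qPochInf q) := by
    rw [hsplit_sum]
    exact add_le_add hfront (le_trans hmid hcore)
  have hb2 : ∑' k, t (k + (n + 1)) ≤ q ^ (m ^ 2) * x ^ m * (A / qPochInf q) :=
    le_trans htail2 hcore
  nlinarith [mul_nonneg hC0 hqh0, mul_nonneg hC0 hqm0]
end
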